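/- arXiv:1910.05268 — 7 statements merged into one kernel-verified Lean document; each statement's English description precedes it below -/
import Mathlib

section
/- Let N ≥ 2, let g ∈ ℝᴺ be nonzero, let ζ ∈ ℝᴺ be a unit vector with g⊥ = g − ⟨g, ζ⟩ζ ≠ 0, and let ε be a unit vector orthogonal to ζ. Define ζ' = ⟨g, ζ⟩ζ + ⟨g, ε⟩ε and assume ζ' ≠ 0. Then 1 − ⟨g/‖g‖, ζ'/‖ζ'‖⟩² = (1 − ⟨g/‖g‖, ζ⟩²) · (1 − ⟨g⊥/‖g⊥‖, ε⟩²). -/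
open scoped RealInnerProductSpace

/-- One step of the iterative estimator: with `ζ' = ⟨g, ζ⟩ ζ + ⟨g, ε⟩ ε` for a unit vector `ε`
orthogonal to the unit vector `ζ`, one has
`1 - ⟨ĝ, ζ̂'⟩² = (1 - ⟨ĝ, ζ⟩²) (1 - ⟨ĝ⊥, ε⟩²)`. -/
theorem one_sub_cosine_sq_update
    (N : ℕ) (hN : 2 ≤ N)
    (g ζ : EuclideanSpace ℝ (Fin N)) (hg : g ≠ 0) (hζ : ‖ζ‖ = 1)
    (gperp : EuclideanSpace ℝ (Fin N))
    (hgperp : gperp = g - ⟪g, ζ⟫ • ζ) (hgperp0 : gperp ≠ 0)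
    (ε : EuclideanSpace ℝ (Fin N)) (hε : ‖ε‖ = 1) (hεζ : ⟪ε, ζ⟫ = 0)
    (ζ' : EuclideanSpace ℝ (Fin N))
    (hζ' : ζ' = ⟪g, ζ⟫ • ζ + ⟪g, ε⟫ • ε) (hζ'0 : ζ' ≠ 0) :
    1 - ⟪‖g‖⁻¹ • g, ‖ζ'‖⁻¹ • ζ'⟫ ^ 2
      = (1 - ⟪‖g‖⁻¹ • g, ζ⟫ ^ 2) * (1 - ⟪‖gperp‖⁻¹ • gperp, ε⟫ ^ 2) := by
  set a := ⟪g, ζ⟫ with ha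
  set b := ⟪g, ε⟫ with hb
  have hζζ : ⟪ζ, ζ⟫ = 1 := by
    rw [real_inner_self_eq_norm_sq, hζ]; norm_num
  have hεε : ⟪ε, ε⟫ = 1 := by
    rw [real_inner_self_eq_norm_sq, hε]; norm_num
  have hζε : ⟪ζ, ε⟫ = 0 := by rw [real_inner_comm]; exact hεζ
  have hgz' : ⟪g, ζ'⟫ = a ^ 2 + b ^ 2 := by
    rw [hζ', inner_add_right, real_inner_smul_right, real_inner_smul_right]
    ring
  have hz'2 : ‖ζ'‖ ^ 2 = a ^ 2 + b ^ 2 := by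
    rw [← real_inner_self_eq_norm_sq, hζ']
    simp only [inner_add_left, inner_add_right, real_inner_smul_left,
      real_inner_smul_right, hζζ, hεε, hζε, hεζ]
    ring
  have hζg : ⟪ζ, g⟫ = a := by rw [real_inner_comm]
  have hp2 : ‖gperp‖ ^ 2 = ‖g‖ ^ 2 - a ^ 2 := by
    rw [← real_inner_self_eq_norm_sq g, ← real_inner_self_eq_norm_sq, hgperp,
      inner_sub_left, inner_sub_right, inner_sub_right, real_inner_smul_left,
      real_inner_smul_right, real_inner_smul_left, real_inner_smul_right,
      hζζ, hζg]
    ring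
  have hpε : ⟪gperp, ε⟫ = b := by
    rw [hgperp, inner_sub_left, real_inner_smul_left, hζε]
    ring
  have hg0 : ‖g‖ ≠ 0 := by simpa using hg
  have hz0 : ‖ζ'‖ ≠ 0 := by simpa using hζ'0
  have hp0 : ‖gperp‖ ≠ 0 := by simpa using hgperp0
  rw [real_inner_smul_left, real_inner_smul_left, real_inner_smul_left,
    real_inner_smul_right, hgz', hpε, ← ha]
  have h1 : ‖ζ'‖ ^ 2 ≠ 0 := pow_ne_zero 2 hz0
  field_simp
  linear_combination (‖g‖^2*b^2 + a^2*‖gperp‖^2 - a^2*b^2) * hz'2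
    - (a^2+b^2) * b^2 * hp2
end

section
/- Let N ≥ 2 and 1 ≤ P ≤ N−1. Let g ∈ ℝᴺ be nonzero, let ζ ∈ ℝᴺ be a unit vector, and set x = ⟨g/‖g‖, ζ⟩. Let ε¹, …, εᴾ be random unit vectors taking values in the orthogonal complement of ζ such that almost surely they are pairwise orthogonal and each εⁱ is marginally distributed according to the uniform probability measure on the unit sphere of the (N−1)-dimensional orthogonal complement of ζ. Define ζ' = ⟨g, ζ⟩ζ + Σᵢ ⟨g, εⁱ⟩εⁱ and assume ζ' ≠ 0 almost surely. Then E[⟨g/‖g‖, ζ'/‖ζ'‖⟩²] − x² = (1 − x²) · P/(N − 1). -/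
open scoped RealInnerProductSpace
open MeasureTheory

variable {N : ℕ}

local notation "E" => EuclideanSpace ℝ (Fin N)

lemma phi_eq (hN : 2 ≤ N) (ζ : EuclideanSpace ℝ (Fin N)) (hζ : ‖ζ‖ = 1)
    (μ : Measure (EuclideanSpace ℝ (Fin N))) [IsProbabilityMeasure μ]
    (hsupp : ∀ᵐ y ∂μ, ‖y‖ = 1 ∧ ⟪y, ζ⟫ = 0)
    (hinv : ∀ R : EuclideanSpace ℝ (Fin N) ≃ₗᵢ[ℝ] EuclideanSpace ℝ (Fin N), R ζ = ζ →
      Measure.map (fun y => R y) μ = μ)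
    (u : EuclideanSpace ℝ (Fin N)) (hu : ⟪u, ζ⟫ = 0) :
    ∫ y, ⟪u, y⟫ ^ 2 ∂μ = ‖u‖ ^ 2 / ((N : ℝ) - 1) := by
  have hcont : ∀ v : E, Continuous (fun y : E => ⟪v, y⟫ ^ 2) :=
    fun v => (continuous_const.inner continuous_id).pow 2
  have hint : ∀ v : E, Integrable (fun y => ⟪v, y⟫ ^ 2) μ := by
    intro v
    refine (integrable_const (‖v‖ ^ 2)).mono' (hcont v).aestronglyMeasurable ?_
    filter_upwards [hsupp] with y hy
    calc ‖⟪v, y⟫ ^ 2‖ = |⟪v, y⟫| ^ 2 := by rw [Real.norm_eq_abs, abs_pow]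
    _ ≤ (‖v‖ * ‖y‖) ^ 2 := by
        have := abs_real_inner_le_norm v y
        have h0 : (0:ℝ) ≤ |⟪v, y⟫| := abs_nonneg _
        nlinarith
    _ = ‖v‖ ^ 2 := by rw [hy.1]; ring
  -- invariance: φ is constant on unit vectors orthogonal to ζ
  have hsame : ∀ v w : E, ‖v‖ = ‖w‖ → ⟪v, ζ⟫ = 0 → ⟪w, ζ⟫ = 0 →
      ∫ y, ⟪v, y⟫ ^ 2 ∂μ = ∫ y, ⟪w, y⟫ ^ 2 ∂μ := by
    intro v w hvw hvζ hwζ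
    set R := Submodule.reflection (Submodule.span ℝ {v - w})ᗮ with hR
    have hRζ : R ζ = ζ := by
      refine Submodule.reflection_mem_subspace_eq_self ?_
      rw [Submodule.mem_orthogonal_singleton_iff_inner_right]
      simp [inner_sub_left, hvζ, hwζ]
    have hmap := hinv R hRζ
    have hRv : R v = w := Submodule.reflection_sub hvw
    calc ∫ y, ⟪v, y⟫ ^ 2 ∂μ = ∫ y, ⟪v, y⟫ ^ 2 ∂(Measure.map (fun y => R y) μ) := by rw [hmap]
    _ = ∫ y, ⟪v, R y⟫ ^ 2 ∂μ := by
        rw [integral_map (R.continuous.measurable.aemeasurable) (hcont v).aestronglyMeasurable]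
    _ = ∫ y, ⟪w, y⟫ ^ 2 ∂μ := by
        congr 1; ext y
        rw [show ⟪v, R y⟫ = ⟪R v, R (R y)⟫ from (R.inner_map_map v (R y)).symm,
          Submodule.reflection_reflection, hRv]
  -- orthonormal basis of the orthogonal complement
  set K := (Submodule.span ℝ {ζ})ᗮ with hK
  have hζ0 : ζ ≠ 0 := by intro h; rw [h, norm_zero] at hζ; norm_num at hζ
  have hrank : Module.finrank ℝ K = N - 1 := by
    have h1 : Module.finrank ℝ (Submodule.span ℝ {ζ}) = 1 := finrank_span_singleton hζ0
    have := Submodule.finrank_add_finrank_orthogonal (𝕜 := ℝ) (Submodule.span ℝ {ζ})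
    rw [h1, finrank_euclideanSpace_fin, ← hK] at this
    omega
  set n := Module.finrank ℝ K with hn
  have hn1 : 1 ≤ n := by omega
  haveI : NeZero n := ⟨by omega⟩
  set b := stdOrthonormalBasis ℝ K with hb
  have hbmem : ∀ k, ((b k : E)) ∈ K := fun k => (b k).2
  have hbζ : ∀ k : Fin n, ⟪((b k : E)), ζ⟫ = 0 := by
    intro k
    have := (Submodule.mem_orthogonal _ _).1 (hbmem k) ζ (Submodule.mem_span_singleton_self ζ)
    rw [real_inner_comm]; exact this
  have hbnorm : ∀ k : Fin n, ‖(b k : E)‖ = 1 := by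
    intro k
    have := b.orthonormal.1 k
    exact this
  -- the sum over the basis integrates to 1
  have hsum : ∑ k : Fin n, ∫ y, ⟪(b k : E), y⟫ ^ 2 ∂μ = 1 := by
    rw [← integral_finset_sum _ (fun k _ => hint _)]
    have : ∀ᵐ y ∂μ, (∑ k : Fin n, ⟪(b k : E), y⟫ ^ 2) = 1 := by
      filter_upwards [hsupp] with y hy
      have hyK : y ∈ K := by
        rw [hK, Submodule.mem_orthogonal_singleton_iff_inner_right, real_inner_comm]
        exact hy.2
      set y' : K := ⟨y, hyK⟩ with hy'
      have h2 := b.sum_inner_mul_inner y' y'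
      have hco : ∀ k : Fin n, (inner ℝ (b k) y' : ℝ) = ⟪(b k : E), y⟫ := fun k => rfl
      have hself : (inner ℝ y' y' : ℝ) = 1 := by
        rw [real_inner_self_eq_norm_sq]
        have : ‖y'‖ = ‖y‖ := rfl
        rw [this, hy.1]; norm_num
      calc (∑ k : Fin n, ⟪(b k : E), y⟫ ^ 2)
          = ∑ k : Fin n, (inner ℝ y' (b k) : ℝ) * inner ℝ (b k) y' := by
            refine Finset.sum_congr rfl fun k _ => ?_
            rw [← hco k, real_inner_comm y' (b k)]; ring
        _ = 1 := by rw [h2, hself]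
    rw [integral_congr_ae this, integral_const]
    simp
  -- all basis integrals are equal
  have hC : ∀ k : Fin n, ∫ y, ⟪(b k : E), y⟫ ^ 2 ∂μ = 1 / (n : ℝ) := by
    intro k
    have hall : ∀ k' : Fin n, ∫ y, ⟪(b k' : E), y⟫ ^ 2 ∂μ = ∫ y, ⟪(b k : E), y⟫ ^ 2 ∂μ :=
      fun k' => hsame _ _ (by rw [hbnorm, hbnorm]) (hbζ k') (hbζ k)
    have hmain : (n : ℝ) * ∫ y, ⟪(b k : E), y⟫ ^ 2 ∂μ = 1 := by
      calc (n : ℝ) * ∫ y, ⟪(b k : E), y⟫ ^ 2 ∂μ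
          = ∑ _k' : Fin n, ∫ y, ⟪(b k : E), y⟫ ^ 2 ∂μ := by
            rw [Finset.sum_const]; simp [nsmul_eq_mul]
        _ = ∑ k' : Fin n, ∫ y, ⟪(b k' : E), y⟫ ^ 2 ∂μ :=
            Finset.sum_congr rfl fun k' _ => (hall k').symm
        _ = 1 := hsum
    have hnne : (n : ℝ) ≠ 0 := by positivity
    field_simp at hmain ⊢
    linarith
  -- conclude for general u
  have hNreal : ((n : ℝ)) = (N : ℝ) - 1 := by
    rw [hrank]; push_cast [Nat.cast_sub (by omega : 1 ≤ N)]; ring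
  rcases eq_or_ne u 0 with rfl | hu0
  · simp
  · have hunorm : ‖u‖ ≠ 0 := norm_ne_zero_iff.2 hu0
    set v := ‖u‖⁻¹ • u with hv
    have hvnorm : ‖v‖ = 1 := by
      rw [hv, norm_smul, norm_inv, norm_norm, inv_mul_cancel₀ hunorm]
    have hvζ : ⟪v, ζ⟫ = 0 := by rw [hv, inner_smul_left]; simp [hu]
    have hveq : ∫ y, ⟪v, y⟫ ^ 2 ∂μ = 1 / (n : ℝ) := by
      rw [hsame v (b ⟨0, hn1⟩ : E) (by rw [hvnorm, hbnorm]) hvζ (hbζ _), hC]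
    have hexp : ∀ y : E, ⟪u, y⟫ ^ 2 = ‖u‖ ^ 2 * ⟪v, y⟫ ^ 2 := by
      intro y
      rw [hv, inner_smul_left, conj_trivial]
      field_simp
    calc ∫ y, ⟪u, y⟫ ^ 2 ∂μ = ∫ y, ‖u‖ ^ 2 * ⟪v, y⟫ ^ 2 ∂μ := by simp_rw [hexp]
      _ = ‖u‖ ^ 2 * ∫ y, ⟪v, y⟫ ^ 2 ∂μ := integral_const_mul _ _
      _ = ‖u‖ ^ 2 / ((N : ℝ) - 1) := by rw [hveq, ← hNreal, mul_one_div]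

/-- One-step improvement of the cosine: for a nonzero `g`, a unit vector `ζ` with
`x = ⟨ĝ, ζ⟩`, and random unit vectors `ε¹, …, εᴾ` in the orthogonal complement of `ζ`,
almost surely pairwise orthogonal and each marginally uniformly distributed (invariant under
all rotations fixing `ζ`) on the unit sphere of that complement, the update
`ζ' = ⟨g, ζ⟩ ζ + ∑ i ⟨g, εⁱ⟩ εⁱ` satisfies
`E[⟨ĝ, ζ̂'⟩²] - x² = (1 - x²) P/(N-1)`. -/
theorem expected_cosine_sq_gain_one_step
    (N P : ℕ) (hN : 2 ≤ N) (hP : 1 ≤ P) (hPN : P ≤ N - 1)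
    {Ω : Type*} [MeasureSpace Ω] [IsProbabilityMeasure (volume : Measure Ω)]
    (g ζ : EuclideanSpace ℝ (Fin N)) (hg : g ≠ 0) (hζ : ‖ζ‖ = 1)
    (x : ℝ) (hx : x = ⟪‖g‖⁻¹ • g, ζ⟫)
    (ε : Fin P → Ω → EuclideanSpace ℝ (Fin N)) (hmeas : ∀ i, Measurable (ε i))
    (hval : ∀ᵐ ω, ∀ i, ‖ε i ω‖ = 1 ∧ ⟪ε i ω, ζ⟫ = 0)
    (horth : ∀ᵐ ω, ∀ i j, i ≠ j → ⟪ε i ω, ε j ω⟫ = 0)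
    (hinv : ∀ i, ∀ R : EuclideanSpace ℝ (Fin N) ≃ₗᵢ[ℝ] EuclideanSpace ℝ (Fin N), R ζ = ζ →
      Measure.map (fun y => R y) (Measure.map (ε i) volume) = Measure.map (ε i) volume)
    (ζ' : Ω → EuclideanSpace ℝ (Fin N))
    (hζ' : ∀ ω, ζ' ω = ⟪g, ζ⟫ • ζ + ∑ i, ⟪g, ε i ω⟫ • ε i ω)
    (hζ'0 : ∀ᵐ ω, ζ' ω ≠ 0) :
    (∫ ω, ⟪‖g‖⁻¹ • g, ‖ζ' ω‖⁻¹ • ζ' ω⟫ ^ 2) - x ^ 2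
      = (1 - x ^ 2) * ((P : ℝ) / ((N : ℝ) - 1)) := by
  have hgn : ‖g‖ ≠ 0 := norm_ne_zero_iff.2 hg
  set gU : EuclideanSpace ℝ (Fin N) := ‖g‖⁻¹ • g with hgU
  have hgUnorm : ‖gU‖ = 1 := by
    rw [hgU, norm_smul, norm_inv, norm_norm, inv_mul_cancel₀ hgn]
  set w : EuclideanSpace ℝ (Fin N) := gU - x • ζ with hw
  have hwζ : ⟪w, ζ⟫ = 0 := by
    rw [hw, inner_sub_left, real_inner_smul_left ζ ζ x, ← hx, real_inner_self_eq_norm_sq, hζ]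
    ring
  have hwnorm : ‖w‖ ^ 2 = 1 - x ^ 2 := by
    have h1 : ⟪w, w⟫ = ⟪gU, gU⟫ - x * ⟪gU, ζ⟫ - (x * ⟪ζ, gU⟫ - x * (x * ⟪ζ, ζ⟫)) := by
      rw [hw, inner_sub_left, inner_sub_right, inner_sub_right,
        real_inner_smul_right gU ζ x, real_inner_smul_left ζ gU x,
        real_inner_smul_left ζ (x • ζ) x, real_inner_smul_right ζ ζ x]
    rw [real_inner_comm gU ζ, ← hx, real_inner_self_eq_norm_sq gU,
      real_inner_self_eq_norm_sq ζ, hgUnorm, hζ] at h1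
    rw [← real_inner_self_eq_norm_sq w, h1]
    ring
  -- each component integral
  have hcomp : ∀ i, ∫ ω, ⟪w, ε i ω⟫ ^ 2 = (1 - x ^ 2) / ((N : ℝ) - 1) := by
    intro i
    set μ := Measure.map (ε i) volume with hμ
    haveI : IsProbabilityMeasure μ := Measure.isProbabilityMeasure_map (hmeas i).aemeasurable
    have hsuppset : MeasurableSet {y : EuclideanSpace ℝ (Fin N) | ‖y‖ = 1 ∧ ⟪y, ζ⟫ = 0} := by
      apply MeasurableSet.inter
      · exact measurableSet_eq_fun continuous_norm.measurable measurable_const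
      · exact measurableSet_eq_fun (continuous_id.inner continuous_const).measurable
          measurable_const
    have hsupp : ∀ᵐ y ∂μ, ‖y‖ = 1 ∧ ⟪y, ζ⟫ = 0 := by
      rw [hμ, ae_map_iff (hmeas i).aemeasurable hsuppset]
      filter_upwards [hval] with ω hω
      exact hω i
    have h2 := phi_eq hN ζ hζ μ hsupp (hinv i) w hwζ
    rw [hμ, integral_map (hmeas i).aemeasurable
      ((continuous_const.inner continuous_id).pow 2).aestronglyMeasurable] at h2
    rw [h2, hwnorm]
  -- integrability of each component
  have hintc : ∀ i, Integrable (fun ω => ⟪w, ε i ω⟫ ^ 2) (volume : Measure Ω) := by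
    intro i
    refine (integrable_const (‖w‖ ^ 2)).mono'
      ((((continuous_const.inner continuous_id).pow 2).measurable.comp (hmeas i)).aestronglyMeasurable) ?_
    filter_upwards [hval] with ω hω
    have h0 := abs_real_inner_le_norm w (ε i ω)
    rw [(hω i).1, mul_one] at h0
    have h1 : (0:ℝ) ≤ |⟪w, ε i ω⟫| := abs_nonneg _
    rw [Real.norm_eq_abs, abs_pow]
    nlinarith
  -- pointwise a.e. identity
  have hae : ∀ᵐ ω, ⟪gU, ‖ζ' ω‖⁻¹ • ζ' ω⟫ ^ 2 = x ^ 2 + ∑ i, ⟪w, ε i ω⟫ ^ 2 := by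
    filter_upwards [hval, horth, hζ'0] with ω hv ho hz
    have hzn : ‖ζ' ω‖ ≠ 0 := norm_ne_zero_iff.2 hz
    set c : ℝ := ⟪g, ζ⟫ with hc
    set a : Fin P → ℝ := fun i => ⟪g, ε i ω⟫ with ha
    set B : EuclideanSpace ℝ (Fin N) := ∑ i, a i • ε i ω with hB
    have hζε : ∀ i, ⟪ζ, ε i ω⟫ = 0 := fun i => by rw [real_inner_comm]; exact (hv i).2
    have h1 : ⟪g, ζ' ω⟫ = c ^ 2 + ∑ i, a i ^ 2 := by
      rw [hζ' ω, inner_add_right, real_inner_smul_right g ζ c, inner_sum]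
      simp only [real_inner_smul_right]
      rw [← hc]
      congr 1
      · ring
      · exact Finset.sum_congr rfl fun i _ => (sq (a i)).symm
    have hζB : ⟪ζ, B⟫ = 0 := by
      rw [hB, inner_sum]
      refine Finset.sum_eq_zero fun i _ => ?_
      rw [real_inner_smul_right ζ (ε i ω) (a i), hζε i, mul_zero]
    have hBB : ⟪B, B⟫ = ∑ i, a i ^ 2 := by
      rw [hB, inner_sum]
      refine Finset.sum_congr rfl fun j _ => ?_
      rw [real_inner_smul_right _ (ε j ω) (a j), sum_inner]
      simp only [real_inner_smul_left]
      rw [Finset.sum_eq_single j (fun i _ hij => by rw [ho i j hij, mul_zero])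
        (fun h => absurd (Finset.mem_univ j) h)]
      rw [real_inner_self_eq_norm_sq, (hv j).1]
      ring
    have h2 : ‖ζ' ω‖ ^ 2 = c ^ 2 + ∑ i, a i ^ 2 := by
      rw [← real_inner_self_eq_norm_sq, hζ' ω, ← hB]
      rw [inner_add_left, inner_add_right, inner_add_right,
        real_inner_smul_left ζ (c • ζ) c, real_inner_smul_right ζ ζ c,
        real_inner_smul_right B ζ c, real_inner_smul_left ζ B c,
        real_inner_self_eq_norm_sq ζ, hζ, hζB, hBB]
      have : ⟪B, ζ⟫ = 0 := by rw [real_inner_comm]; exact hζB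
      rw [this]
      ring
    have hgζ' : ⟪g, ζ' ω⟫ = ‖ζ' ω‖ ^ 2 := by rw [h1, h2]
    have hxc : x = ‖g‖⁻¹ * c := by
      rw [hx, hgU, real_inner_smul_left g ζ (‖g‖⁻¹), hc]
    have hwε : ∀ i, ⟪w, ε i ω⟫ = ‖g‖⁻¹ * a i := by
      intro i
      rw [hw, inner_sub_left, hgU, real_inner_smul_left g (ε i ω) (‖g‖⁻¹),
        real_inner_smul_left ζ (ε i ω) x, hζε i, ha]
      ring
    have hLHS : ⟪gU, ‖ζ' ω‖⁻¹ • ζ' ω⟫ = ‖g‖⁻¹ * ‖ζ' ω‖ := by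
      rw [hgU, real_inner_smul_left g (‖ζ' ω‖⁻¹ • ζ' ω) (‖g‖⁻¹),
        real_inner_smul_right g (ζ' ω) (‖ζ' ω‖⁻¹), hgζ']
      field_simp
    rw [hLHS, hxc]
    rw [Finset.sum_congr rfl fun i _ => congrArg (· ^ 2) (hwε i)]
    simp only [mul_pow, h2, mul_add, Finset.mul_sum]
  -- assemble
  have hfin : (∫ ω, ⟪gU, ‖ζ' ω‖⁻¹ • ζ' ω⟫ ^ 2)
      = x ^ 2 + (P : ℝ) * ((1 - x ^ 2) / ((N : ℝ) - 1)) := by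
    rw [integral_congr_ae hae]
    rw [integral_add (integrable_const _) (integrable_finset_sum _ fun i _ => hintc i),
      integral_const, integral_finset_sum _ fun i _ => hintc i]
    simp only [measure_univ, ENNReal.toReal_one, smul_eq_mul, one_mul]
    rw [Finset.sum_congr rfl fun i _ => hcomp i, Finset.sum_const]
    simp [nsmul_eq_mul]
  rw [hfin]
  ring
end

section
/- Let N ≥ 2, P ≥ 1 and δ ∈ (0, 1). Let (X_t)_{t≥0} be a stochastic process adapted to a filtration (F_t) with values in [0, 1] such that for all t ≥ 1, almost surely E[X_t² | F_{t−1}] = X_{t−1}² + (1 − X_{t−1}²)·P/(N − 1). Let T = inf{t ≥ 0 : X_t² ≥ 1 − δ}. Then E[T] ≤ ((N − 1)/P)·(1 + ln(1/δ)). -/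
open MeasureTheory
open scoped ENNReal

noncomputable def hpot (δ y : ℝ) : ℝ :=
  if y ≤ δ then y / δ else 1 + Real.log (y / δ)

lemma measurable_hpot (δ : ℝ) : Measurable (hpot δ) := by
  unfold hpot
  exact Measurable.ite (measurableSet_le measurable_id measurable_const)
    (measurable_id.div_const δ)
    ((Real.measurable_log.comp (measurable_id.div_const δ)).const_add 1)

lemma log_ge_aux {x : ℝ} (hx : 0 < x) : 1 - x⁻¹ ≤ Real.log x := by
  have h := Real.log_le_sub_one_of_pos (inv_pos.2 hx)
  rw [Real.log_inv] at h
  linarith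

lemma hpot_nonneg {δ z : ℝ} (hδ : 0 < δ) (hz : 0 ≤ z) : 0 ≤ hpot δ z := by
  unfold hpot
  split_ifs with h
  · positivity
  · push_neg at h
    have : (0:ℝ) ≤ Real.log (z / δ) :=
      Real.log_nonneg ((one_le_div hδ).2 h.le)
    linarith

lemma hpot_le {δ z : ℝ} (hδ0 : 0 < δ) (hδ1 : δ < 1) (hz : z ≤ 1) :
    hpot δ z ≤ 1 + Real.log (1 / δ) := by
  have hlog : (0:ℝ) ≤ Real.log (1 / δ) :=
    Real.log_nonneg ((one_le_div hδ0).2 hδ1.le)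
  unfold hpot
  split_ifs with h
  · have : z / δ ≤ 1 := (div_le_one hδ0).2 h
    linarith
  · push_neg at h
    have h1 : z / δ ≤ 1 / δ := div_le_div_of_nonneg_right hz hδ0.le |>.trans_eq rfl
    have h2 : Real.log (z / δ) ≤ Real.log (1 / δ) :=
      Real.log_le_log (div_pos (hδ0.trans h) hδ0) h1
    linarith

lemma hpot_abs {δ : ℝ} (hδ : 0 < δ) (z : ℝ) : |hpot δ z| ≤ 1 + |z| / δ := by
  unfold hpot
  split_ifs with h
  · rw [abs_div, abs_of_pos hδ]
    have : (0:ℝ) ≤ |z| / δ := by positivity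
    linarith
  · push_neg at h
    have hz0 : 0 < z := lt_trans hδ h
    have hlog0 : (0:ℝ) ≤ Real.log (z / δ) := Real.log_nonneg ((one_le_div hδ).2 h.le)
    have hlog1 : Real.log (z / δ) ≤ z / δ - 1 :=
      Real.log_le_sub_one_of_pos (by positivity)
    rw [abs_of_nonneg (by linarith), abs_of_pos hz0]
    linarith

lemma hpot_tangent {δ : ℝ} (hδ : 0 < δ) (w z : ℝ) :
    hpot δ z ≤ hpot δ w + (z - w) / max δ w := by
  unfold hpot
  rcases le_or_gt z δ with hz | hz <;> rcases le_or_gt w δ with hw | hw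
  · rw [if_pos hz, if_pos hw, max_eq_left hw]
    rw [← add_div]
    ring_nf
    exact le_refl _
  · -- z ≤ δ < w
    rw [if_pos hz, if_neg (not_le.2 hw), max_eq_right hw.le]
    have hw0 : 0 < w := lt_trans hδ hw
    have hlog : 1 - δ / w ≤ Real.log (w / δ) := by
      have := log_ge_aux (x := w / δ) (by positivity)
      rwa [show (w / δ)⁻¹ = δ / w by field_simp] at this
    have hkey : z * (1 / δ - 1 / w) ≤ δ * (1 / δ - 1 / w) := by
      apply mul_le_mul_of_nonneg_right hz
      have : 1 / w ≤ 1 / δ := one_div_le_one_div_of_le hδ hw.le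
      linarith
    have e1 : δ * (1 / δ - 1 / w) = 1 - δ / w := by field_simp
    have e2 : z * (1 / δ - 1 / w) = z / δ - z / w := by field_simp
    have e3 : (z - w) / w = z / w - 1 := by field_simp
    linarith
  · -- w ≤ δ < z
    rw [if_neg (not_le.2 hz), if_pos hw, max_eq_left hw]
    have hlog : Real.log (z / δ) ≤ z / δ - 1 :=
      Real.log_le_sub_one_of_pos (div_pos (hδ.trans hz) hδ)
    have : w / δ + (z - w) / δ = z / δ := by field_simp; ring
    linarith
  · -- δ < w, δ < z
    rw [if_neg (not_le.2 hz), if_neg (not_le.2 hw), max_eq_right hw.le]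
    have hw0 : 0 < w := lt_trans hδ hw
    have hz0 : 0 < z := lt_trans hδ hz
    have hlog : Real.log (z / w) ≤ z / w - 1 :=
      Real.log_le_sub_one_of_pos (by positivity)
    have e1 : Real.log (z / δ) = Real.log (z / w) + Real.log (w / δ) := by
      rw [← Real.log_mul (by positivity) (by positivity)]
      congr 1
      field_simp
    have e2 : (z - w) / w = z / w - 1 := by field_simp
    linarith

lemma hpot_drift {δ p y : ℝ} (hδ : 0 < δ) (hp : 0 < p) (hy : δ < y) (hy1 : y ≤ 1) :
    hpot δ ((1 - p) * y) ≤ hpot δ y - p := by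
  have hy0 : 0 < y := lt_trans hδ hy
  have hRHS : hpot δ y = 1 + Real.log (y / δ) := if_neg (not_le.2 hy)
  have hlog0 : (0:ℝ) ≤ Real.log (y / δ) := Real.log_nonneg ((one_le_div hδ).2 hy.le)
  rw [hRHS]
  unfold hpot
  split_ifs with h
  · -- (1-p)*y ≤ δ
    rcases le_or_gt (1 - p) 0 with h1 | h1
    · have : (1 - p) * y / δ ≤ (1 - p) * 1 := by
        rw [div_le_iff₀ hδ]
        have hyd : δ ≤ y := hy.le
        nlinarith
      linarith
    · -- 0 < 1 - p, (1-p) ≤ δ/y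
      have hq : (1 - p) * y ≤ δ := h
      have hlog : 1 - δ / y ≤ Real.log (y / δ) := by
        have := log_ge_aux (x := y / δ) (by positivity)
        rwa [show (y / δ)⁻¹ = δ / y by field_simp] at this
      rw [div_le_iff₀ hδ]
      have e : (1 - p) * (y - δ) ≤ (δ / y) * (y - δ) := by
        apply mul_le_mul_of_nonneg_right _ (by linarith)
        rw [le_div_iff₀ hy0]; linarith
      have e2 : (δ / y) * (y - δ) = δ * (1 - δ / y) := by field_simp
      nlinarith
  · -- δ < (1-p)*y
    push_neg at h
    have h1p : 0 < 1 - p := by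
      by_contra hc
      push_neg at hc
      nlinarith
    have e1 : Real.log ((1 - p) * y / δ) = Real.log (1 - p) + Real.log (y / δ) := by
      rw [show (1 - p) * y / δ = (1 - p) * (y / δ) by ring,
        Real.log_mul (ne_of_gt h1p) (by positivity)]
    have hlog : Real.log (1 - p) ≤ -p := by
      have := Real.log_le_sub_one_of_pos h1p
      linarith
    linarith

/-- Additive-drift bound on the hitting time of the iterative ES estimator: if the squared
cosine process `X_t²` with values in `[0,1]` satisfies
`E[X_t² | F_{t-1}] = X_{t-1}² + (1 - X_{t-1}²) P/(N-1)`, then the first time `T` with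
`X_T² ≥ 1 - δ` satisfies `E[T] ≤ ((N-1)/P) (1 + ln(1/δ))`. -/
theorem hitting_time_bound_variable_drift
    (N P : ℕ) (hN : 2 ≤ N) (hP : 1 ≤ P)
    (δ : ℝ) (hδ : δ ∈ Set.Ioo (0 : ℝ) 1)
    {Ω : Type*} {mΩ : MeasurableSpace Ω} (μ : Measure Ω) [IsProbabilityMeasure μ]
    (F : Filtration ℕ mΩ)
    (X : ℕ → Ω → ℝ) (hadp : Adapted F X)
    (hrange : ∀ t ω, X t ω ∈ Set.Icc (0 : ℝ) 1)
    (hdrift : ∀ t : ℕ, 1 ≤ t →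
      μ[fun ω => (X t ω) ^ 2 | F (t - 1)]
        =ᵐ[μ] fun ω => (X (t - 1) ω) ^ 2
          + (1 - (X (t - 1) ω) ^ 2) * ((P : ℝ) / ((N : ℝ) - 1))) :
    ∫⁻ ω, ⨅ (t : ℕ) (_ : 1 - δ ≤ (X t ω) ^ 2), (t : ℝ≥0∞) ∂μ
      ≤ ENNReal.ofReal ((((N : ℝ) - 1) / P) * (1 + Real.log (1 / δ))) := by
  obtain ⟨hδ0, hδ1⟩ := hδ
  have hN1 : (1:ℝ) ≤ (N:ℝ) - 1 := by
    have : (2:ℝ) ≤ (N:ℝ) := by exact_mod_cast hN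
    linarith
  have hP1 : (1:ℝ) ≤ (P:ℝ) := by exact_mod_cast hP
  set p : ℝ := (P : ℝ) / ((N : ℝ) - 1) with hpdef
  have hp0 : 0 < p := div_pos (by linarith) (by linarith)
  set C : ℝ := 1 + Real.log (1 / δ) with hCdef
  have hlogpos : (0:ℝ) ≤ Real.log (1 / δ) := Real.log_nonneg ((one_le_div hδ0).2 hδ1.le)
  have hC1 : (1:ℝ) ≤ C := by simp only [hCdef]; linarith
  -- the transformed process
  set Y : ℕ → Ω → ℝ := fun t ω => 1 - (X t ω) ^ 2 with hYdef
  have hYmeas : ∀ t, StronglyMeasurable[F t] (Y t) := fun t =>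
    stronglyMeasurable_const.sub ((hadp t).pow_const 2).stronglyMeasurable
  have hYmeas0 : ∀ t, Measurable (Y t) := fun t =>
    ((hYmeas t).measurable).mono (F.le t) le_rfl
  have hY0 : ∀ t ω, 0 ≤ Y t ω := by
    intro t ω
    obtain ⟨h0, h1⟩ := hrange t ω
    simp only [hYdef]
    nlinarith
  have hY1 : ∀ t ω, Y t ω ≤ 1 := by
    intro t ω
    have := sq_nonneg (X t ω)
    simp only [hYdef]
    nlinarith
  -- the events "not yet hit at time t"
  set A : ℕ → Set Ω := fun t => {ω | ∀ s ≤ t, δ < Y s ω} with hAdef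
  have hAmeasF : ∀ t, MeasurableSet[F t] (A t) := by
    intro t
    have : A t = ⋂ (s : ℕ) (_ : s ≤ t), {ω | δ < Y s ω} := by
      ext ω; simp [hAdef, Set.mem_iInter]
    rw [this]
    refine MeasurableSet.iInter fun s => MeasurableSet.iInter fun hs => ?_
    exact F.mono hs _ (measurableSet_lt measurable_const (hYmeas s).measurable)
  have hAmeas : ∀ t, MeasurableSet (A t) := fun t => F.le t _ (hAmeasF t)
  have hAanti : ∀ t, A (t + 1) ⊆ A t := fun t ω hω s hs => hω s (hs.trans (Nat.le_succ t))
  -- bounded functions are integrable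
  have hint : ∀ (f : Ω → ℝ), AEStronglyMeasurable f μ → ∀ (c : ℝ), (∀ ω, |f ω| ≤ c) →
      Integrable f μ := by
    intro f hf c hb
    exact (integrable_const c).mono' hf (ae_of_all _ (fun ω => by simpa using hb ω))
  have hintY : ∀ t, Integrable (Y t) μ :=
    fun t => hint (Y t) (hYmeas0 t).aestronglyMeasurable 1
      (fun ω => abs_le.2 ⟨by linarith [hY0 t ω], hY1 t ω⟩)
  have hintsq : ∀ t, Integrable (fun ω => (X t ω) ^ 2) μ := by
    intro t
    refine hint _ ?_ 1 ?_
    · exact (((hadp t).pow_const 2).mono (F.le t) le_rfl).aestronglyMeasurable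
    · intro ω
      obtain ⟨h0, h1⟩ := hrange t ω
      rw [abs_le]; constructor <;> nlinarith
  have hintpot : ∀ t, Integrable (fun ω => hpot δ (Y t ω)) μ := by
    intro t
    refine hint _ (((measurable_hpot δ).comp (hYmeas0 t)).aestronglyMeasurable) (1 + 1/δ) ?_
    intro ω
    refine (hpot_abs hδ0 _).trans ?_
    have : |Y t ω| ≤ 1 := abs_le.2 ⟨by linarith [hY0 t ω], hY1 t ω⟩
    have := div_le_div_of_nonneg_right this hδ0.le
    simp only [one_div] at *
    linarith [div_le_div_of_nonneg_right (abs_le.2 ⟨by linarith [hY0 t ω], hY1 t ω⟩ : |Y t ω| ≤ 1) hδ0.le]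
  -- partial expectations
  set u : ℕ → ℝ := fun t => ∫ ω in A t, hpot δ (Y t ω) ∂μ with hudef
  have key : ∀ t : ℕ, u (t + 1) + p * (μ (A t)).toReal ≤ u t := by
    intro t
    have hm : F t ≤ mΩ := F.le t
    set w : Ω → ℝ := fun ω => (1 - p) * Y t ω with hwdef
    have hwmeasF : Measurable[F t] w := (hYmeas t).measurable.const_mul (1 - p)
    have hwmeas : Measurable w := hwmeasF.mono hm le_rfl
    have hwbd : ∀ ω, |w ω| ≤ |1 - p| := by
      intro ω
      simp only [hwdef, abs_mul]
      calc |1 - p| * |Y t ω| ≤ |1 - p| * 1 := by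
            refine mul_le_mul_of_nonneg_left ?_ (abs_nonneg _)
            exact abs_le.2 ⟨by linarith [hY0 t ω], hY1 t ω⟩
        _ = |1 - p| := mul_one _
    set s : Ω → ℝ := fun ω => (max δ (w ω))⁻¹ with hsdef
    have hsmeasF : Measurable[F t] s := (measurable_const.max hwmeasF).inv
    have hsmeas : Measurable s := hsmeasF.mono hm le_rfl
    have hsbd : ∀ ω, 0 < s ω ∧ s ω ≤ δ⁻¹ := by
      intro ω
      have h1 : δ ≤ max δ (w ω) := le_max_left _ _
      have h2 : 0 < max δ (w ω) := lt_of_lt_of_le hδ0 h1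
      exact ⟨inv_pos.2 h2, inv_anti₀ hδ0 h1⟩
    -- conditional expectation of Y (t+1)
    have hcondY : μ[Y (t + 1)|F t] =ᵐ[μ] w := by
      have hd := hdrift (t + 1) (Nat.le_add_left 1 t)
      simp only [Nat.add_sub_cancel] at hd
      have hsub : μ[Y (t + 1)|F t]
          =ᵐ[μ] μ[fun _ => (1 : ℝ)|F t] - μ[fun ω => (X (t + 1) ω) ^ 2|F t] := by
        have hYe : Y (t + 1) = (fun _ => (1 : ℝ)) - fun ω => (X (t + 1) ω) ^ 2 := rfl
        rw [hYe]
        exact condExp_sub (integrable_const 1) (hintsq (t + 1)) _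
      refine hsub.trans ?_
      rw [condExp_const hm (1 : ℝ)]
      filter_upwards [hd] with ω hω
      simp only [Pi.sub_apply, hω, hwdef, hYdef]
      ring
    -- the three parts of the tangent-line majorant
    set g1 : Ω → ℝ := fun ω => hpot δ (w ω) with hg1
    set g2 : Ω → ℝ := fun ω => s ω * Y (t + 1) ω with hg2
    set g3 : Ω → ℝ := fun ω => s ω * w ω with hg3
    have hintg1 : Integrable g1 μ := by
      refine hint _ (((measurable_hpot δ).comp hwmeas).aestronglyMeasurable)
        (1 + |1 - p| / δ) ?_
      intro ω
      refine (hpot_abs hδ0 _).trans ?_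
      have := div_le_div_of_nonneg_right (hwbd ω) hδ0.le
      linarith
    have hintg2 : Integrable g2 μ := by
      refine hint _ ((hsmeas.mul (hYmeas0 (t + 1))).aestronglyMeasurable) δ⁻¹ ?_
      intro ω
      rw [hg2, abs_mul]
      obtain ⟨hs1, hs2⟩ := hsbd ω
      have hYb : |Y (t + 1) ω| ≤ 1 :=
        abs_le.2 ⟨by linarith [hY0 (t + 1) ω], hY1 (t + 1) ω⟩
      calc |s ω| * |Y (t + 1) ω| ≤ δ⁻¹ * 1 :=
            mul_le_mul (by rwa [abs_of_pos hs1]) hYb (abs_nonneg _) (by positivity)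
        _ = δ⁻¹ := mul_one _
    have hintg3 : Integrable g3 μ := by
      refine hint _ ((hsmeas.mul hwmeas).aestronglyMeasurable) (δ⁻¹ * |1 - p|) ?_
      intro ω
      rw [hg3, abs_mul]
      obtain ⟨hs1, hs2⟩ := hsbd ω
      exact mul_le_mul (by rwa [abs_of_pos hs1]) (hwbd ω) (abs_nonneg _) (by positivity)
    -- pointwise tangent bound
    have hptw : ∀ ω, hpot δ (Y (t + 1) ω) ≤ (g1 + g2 - g3) ω := by
      intro ω
      have htan := hpot_tangent hδ0 (w ω) (Y (t + 1) ω)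
      rw [div_eq_mul_inv] at htan
      have he : (g1 + g2 - g3) ω
          = hpot δ (w ω) + (Y (t + 1) ω - w ω) * (max δ (w ω))⁻¹ := by
        simp only [Pi.add_apply, Pi.sub_apply, hg1, hg2, hg3, hsdef]
        ring
      rw [he]
      exact htan
    -- conditional expectation of the majorant
    have hcg : μ[g1 + g2 - g3|F t] =ᵐ[μ] g1 := by
      have e1 : μ[g1 + g2 - g3|F t] =ᵐ[μ] μ[g1 + g2|F t] - μ[g3|F t] :=
        condExp_sub (hintg1.add hintg2) hintg3 _
      have e2 : μ[g1 + g2|F t] =ᵐ[μ] μ[g1|F t] + μ[g2|F t] := condExp_add hintg1 hintg2 _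
      have e3 : μ[g1|F t] = g1 :=
        condExp_of_stronglyMeasurable hm
          (((measurable_hpot δ).comp hwmeasF).stronglyMeasurable) hintg1
      have e4 : μ[g2|F t] =ᵐ[μ] fun ω => s ω * (μ[Y (t + 1)|F t]) ω :=
        condExp_mul_of_stronglyMeasurable_left hsmeasF.stronglyMeasurable
          (show Integrable (s * Y (t + 1)) μ from hintg2) (hintY (t + 1))
      have e4' : μ[g2|F t] =ᵐ[μ] g3 := by
        refine e4.trans ?_
        filter_upwards [hcondY] with ω hω
        simp only [hg3, hω]
      have e5 : μ[g3|F t] = g3 :=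
        condExp_of_stronglyMeasurable hm
          (hsmeasF.stronglyMeasurable.mul hwmeasF.stronglyMeasurable) hintg3
      refine e1.trans ?_
      rw [e5]
      filter_upwards [e2, e4'] with ω h2 h4
      simp only [Pi.sub_apply, h2, Pi.add_apply, e3, h4]
      ring
    have hle : μ[fun ω => hpot δ (Y (t + 1) ω)|F t] ≤ᵐ[μ] g1 := by
      have h1 := condExp_mono (m := F t) (μ := μ) (hintpot (t + 1)) ((hintg1.add hintg2).sub hintg3)
        (ae_of_all _ hptw)
      filter_upwards [h1, hcg] with ω hω1 hω2
      rw [← hω2]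
      exact hω1
    -- on A t the majorant is at most `hpot δ (Y t) - p`
    have hdriftA : ∀ᵐ ω ∂(μ.restrict (A t)),
        (μ[fun ω => hpot δ (Y (t + 1) ω)|F t]) ω ≤ hpot δ (Y t ω) - p := by
      filter_upwards [ae_restrict_of_ae hle, ae_restrict_mem (hAmeas t)] with ω h1 h2
      refine h1.trans ?_
      have hmemδ : δ < Y t ω := h2 t le_rfl
      have := hpot_drift hδ0 hp0 hmemδ (hY1 t ω)
      simpa only [hg1, hwdef] using this
    -- chain of set integrals
    have s1 : u (t + 1) ≤ ∫ ω in A t, hpot δ (Y (t + 1) ω) ∂μ := by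
      refine setIntegral_mono_set (hintpot (t + 1)).integrableOn
        (ae_of_all _ fun ω => hpot_nonneg hδ0 (hY0 (t + 1) ω))
        (HasSubset.Subset.eventuallyLE (hAanti t))
    have s2 : ∫ ω in A t, hpot δ (Y (t + 1) ω) ∂μ
        = ∫ ω in A t, (μ[fun ω => hpot δ (Y (t + 1) ω)|F t]) ω ∂μ :=
      (setIntegral_condExp hm (hintpot (t + 1)) (hAmeasF t)).symm
    have s3 : ∫ ω in A t, (μ[fun ω => hpot δ (Y (t + 1) ω)|F t]) ω ∂μ
        ≤ ∫ ω in A t, (hpot δ (Y t ω) - p) ∂μ :=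
      setIntegral_mono_ae_restrict integrable_condExp.integrableOn
        (((hintpot t).sub (integrable_const p)).integrableOn) hdriftA
    have s4 : ∫ ω in A t, (hpot δ (Y t ω) - p) ∂μ = u t - p * (μ (A t)).toReal := by
      rw [integral_sub ((hintpot t).integrableOn) (integrable_const p).integrableOn]
      rw [setIntegral_const]
      simp only [hudef, smul_eq_mul]
      change _ - (μ (A t)).toReal * p = _
      ring
    linarith
  have hu_nonneg : ∀ t, 0 ≤ u t := fun t =>
    setIntegral_nonneg (hAmeas t) (fun ω _ => hpot_nonneg hδ0 (hY0 t ω))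
  have hu0 : u 0 ≤ C := by
    have h1 : u 0 ≤ ∫ _ in A 0, C ∂μ := by
      refine setIntegral_mono_on ((hintpot 0).integrableOn) (integrableOn_const (measure_ne_top μ _))
        (hAmeas 0) (fun ω _ => hpot_le hδ0 hδ1 (hY1 0 ω))
    rw [setIntegral_const] at h1
    have h2 : (μ (A 0)).toReal ≤ 1 := by
      have := prob_le_one (μ := μ) (s := A 0)
      simpa using ENNReal.toReal_mono (by simp) this
    calc u 0 ≤ (μ (A 0)).toReal • C := h1
      _ = (μ (A 0)).toReal * C := smul_eq_mul _ _
      _ ≤ 1 * C := by nlinarith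
      _ = C := one_mul C
  have hsum : ∀ n : ℕ, p * ∑ t ∈ Finset.range n, (μ (A t)).toReal ≤ C := by
    intro n
    have hmain : u n + p * ∑ t ∈ Finset.range n, (μ (A t)).toReal ≤ u 0 := by
      induction n with
      | zero => simp
      | succ n ih =>
        have := key n
        rw [Finset.sum_range_succ, mul_add]
        linarith
    linarith [hu_nonneg n, hu0]
  -- rewrite the hitting time as a sum of indicators
  have hT : ∀ ω, (⨅ (t : ℕ) (_ : 1 - δ ≤ (X t ω) ^ 2), (t : ℝ≥0∞))
      = ∑' n : ℕ, (A n).indicator (fun _ => (1 : ℝ≥0∞)) ω := by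
    intro ω
    have hiff : ∀ n, ω ∈ A n ↔ ∀ s ≤ n, ¬ (1 - δ ≤ (X s ω) ^ 2) := by
      intro n
      simp only [hAdef, Set.mem_setOf_eq, hYdef]
      constructor
      · intro h s hs hc
        have := h s hs
        linarith
      · intro h s hs
        have := h s hs
        push_neg at this
        linarith
    by_cases hex : ∃ t, 1 - δ ≤ (X t ω) ^ 2
    · set m := Nat.find hex with hm
      have hlhs : (⨅ (t : ℕ) (_ : 1 - δ ≤ (X t ω) ^ 2), (t : ℝ≥0∞)) = (m : ℝ≥0∞) := by
        apply le_antisymm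
        · exact iInf₂_le m (Nat.find_spec hex)
        · exact le_iInf₂ fun t ht => by exact_mod_cast Nat.find_min' hex ht
      have hmem : ∀ n, ω ∈ A n ↔ n < m := by
        intro n
        rw [hiff n]
        constructor
        · intro h
          by_contra hc
          push_neg at hc
          exact h m hc (Nat.find_spec hex)
        · intro h s hs
          exact Nat.find_min hex (lt_of_le_of_lt hs h)
      have hrhs : ∑' n : ℕ, (A n).indicator (fun _ => (1 : ℝ≥0∞)) ω
          = ∑' n : ℕ, (if n < m then (1 : ℝ≥0∞) else 0) := by
        refine tsum_congr fun n => ?_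
        by_cases h : ω ∈ A n
        · rw [Set.indicator_of_mem h, if_pos ((hmem n).1 h)]
        · rw [Set.indicator_of_notMem h, if_neg (fun hc => h ((hmem n).2 hc))]
      rw [hlhs, hrhs]
      rw [tsum_eq_sum (s := Finset.range m)
        (fun n hn => if_neg (by simpa using hn))]
      rw [Finset.sum_congr rfl (fun n hn => if_pos (Finset.mem_range.1 hn))]
      simp
    · push_neg at hex
      have hlhs : (⨅ (t : ℕ) (_ : 1 - δ ≤ (X t ω) ^ 2), (t : ℝ≥0∞)) = ⊤ := by
        rw [iInf_eq_top]
        intro t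
        rw [iInf_eq_top]
        intro ht
        exact absurd ht (not_le.2 (hex t))
      have hmem : ∀ n, ω ∈ A n := fun n => (hiff n).2 fun s _ => not_le.2 (hex s)
      have hrhs : ∑' n : ℕ, (A n).indicator (fun _ => (1 : ℝ≥0∞)) ω = ⊤ := by
        have : ∀ n : ℕ, (A n).indicator (fun _ => (1 : ℝ≥0∞)) ω = 1 :=
          fun n => Set.indicator_of_mem (hmem n) _
        rw [tsum_congr this]
        exact ENNReal.tsum_const_eq_top_of_ne_zero one_ne_zero
      rw [hlhs, hrhs]
  calc ∫⁻ ω, ⨅ (t : ℕ) (_ : 1 - δ ≤ (X t ω) ^ 2), (t : ℝ≥0∞) ∂μ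
      = ∫⁻ ω, ∑' n : ℕ, (A n).indicator (fun _ => (1 : ℝ≥0∞)) ω ∂μ :=
        lintegral_congr hT
    _ = ∑' n : ℕ, ∫⁻ ω, (A n).indicator (fun _ => (1 : ℝ≥0∞)) ω ∂μ :=
        lintegral_tsum (fun n => (measurable_one.indicator (hAmeas n)).aemeasurable)
    _ = ∑' n : ℕ, μ (A n) := by
        exact tsum_congr fun n => lintegral_indicator_one (hAmeas n)
    _ ≤ ENNReal.ofReal (C / p) := by
        rw [ENNReal.tsum_eq_iSup_nat]
        refine iSup_le fun n => ?_
        have heq : ∑ t ∈ Finset.range n, μ (A t)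
            = ENNReal.ofReal (∑ t ∈ Finset.range n, (μ (A t)).toReal) := by
          rw [ENNReal.ofReal_sum_of_nonneg (fun _ _ => ENNReal.toReal_nonneg)]
          exact Finset.sum_congr rfl fun t _ => (ENNReal.ofReal_toReal (measure_ne_top μ _)).symm
        rw [heq]
        refine ENNReal.ofReal_le_ofReal ?_
        rw [le_div_iff₀ hp0]
        calc (∑ t ∈ Finset.range n, (μ (A t)).toReal) * p
            = p * ∑ t ∈ Finset.range n, (μ (A t)).toReal := mul_comm _ _
          _ ≤ C := hsum n
    _ = ENNReal.ofReal ((((N : ℝ) - 1) / P) * C) := by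
        congr 1
        rw [hpdef]
        field_simp
end

section
/- (Additive drift theorem) Let (X_t)_{t≥0} be a stochastic process adapted to a filtration (F_t) with values in [0, ∞) and X_0 = n almost surely for some n ≥ 0. Suppose there exists c > 0 such that for all t ≥ 0, almost surely on the event {X_t > 0}, E[X_{t+1} | F_t] ≤ X_t − c. Let T = inf{t ≥ 0 : X_t = 0}. Then E[T] ≤ n/c. -/
open MeasureTheory
open scoped ENNReal

/-- Additive drift theorem: if a nonnegative adapted integrable process starts at `n` and,
on the event `X_t > 0`, satisfies `E[X_{t+1} | F_t] ≤ X_t - c` for some `c > 0`, then the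
first hitting time `T` of `0` satisfies `E[T] ≤ n / c`. -/
theorem additive_drift_theorem
    {Ω : Type*} {mΩ : MeasurableSpace Ω} (μ : Measure Ω) [IsProbabilityMeasure μ]
    (F : Filtration ℕ mΩ)
    (X : ℕ → Ω → ℝ) (hadp : Adapted F X)
    (hint : ∀ t, Integrable (X t) μ)
    (hnonneg : ∀ t ω, 0 ≤ X t ω)
    (n : ℝ) (hn : 0 ≤ n) (h0 : ∀ᵐ ω ∂μ, X 0 ω = n)
    (c : ℝ) (hc : 0 < c)
    (hdrift : ∀ t : ℕ, ∀ᵐ ω ∂μ, 0 < X t ω → (μ[X (t + 1) | F t]) ω ≤ X t ω - c) :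
    ∫⁻ ω, ⨅ (t : ℕ) (_ : X t ω = 0), (t : ℝ≥0∞) ∂μ ≤ ENNReal.ofReal (n / c) := by
  classical
  -- the event "not yet hit 0 by time t"
  set A : ℕ → Set Ω := fun t => {ω | ∀ s ≤ t, X s ω ≠ 0} with hA
  have hAmeasF : ∀ t, MeasurableSet[F t] (A t) := by
    intro t
    have : A t = ⋂ s ∈ Finset.range (t + 1), {ω | X s ω ≠ 0} := by
      ext ω
      simp [hA, Nat.lt_succ_iff]
    rw [this]
    refine MeasurableSet.biInter (Finset.range (t + 1)).countable_toSet ?_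
    intro s hs
    have hsle : s ≤ t := Nat.lt_succ_iff.mp (Finset.mem_range.mp hs)
    have hm : Measurable[F t] (X s) :=
      (hadp s).mono (F.mono hsle) le_rfl
    exact (hm (MeasurableSet.singleton 0)).compl
  have hAmeas : ∀ t, MeasurableSet (A t) := fun t => (F.le t) _ (hAmeasF t)
  have hAmono : ∀ t, A (t + 1) ⊆ A t := by
    intro t ω hω s hs
    exact hω s (hs.trans (Nat.le_succ t))
  -- key drift estimate
  have key : ∀ t : ℕ,
      (∫ ω in A (t+1), X (t+1) ω ∂μ) + c * (μ (A t)).toReal ≤ ∫ ω in A t, X t ω ∂μ := by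
    intro t
    have h1 : (∫ ω in A (t+1), X (t+1) ω ∂μ) ≤ ∫ ω in A t, X (t+1) ω ∂μ := by
      refine setIntegral_mono_set ((hint (t+1)).integrableOn) ?_ ?_
      · exact Filter.Eventually.of_forall fun ω => hnonneg _ ω
      · exact HasSubset.Subset.eventuallyLE (hAmono t)
    have h2 : (∫ ω in A t, X (t+1) ω ∂μ) = ∫ ω in A t, (μ[X (t+1) | F t]) ω ∂μ :=
      (setIntegral_condExp (F.le t) (hint (t+1)) (hAmeasF t)).symm
    have h3 : (∫ ω in A t, (μ[X (t+1) | F t]) ω ∂μ) ≤ ∫ ω in A t, (X t ω - c) ∂μ := by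
      refine setIntegral_mono_ae_restrict (integrable_condExp.integrableOn)
        (((hint t).sub (integrable_const c)).integrableOn) ?_
      have h4 := ae_restrict_of_ae (μ := μ) (s := A t) (hdrift t)
      have h5 := ae_restrict_mem (μ := μ) (hAmeas t)
      filter_upwards [h4, h5] with ω hω hmem
      have : 0 < X t ω := lt_of_le_of_ne (hnonneg t ω) (Ne.symm (hmem t le_rfl))
      exact hω this
    have h6 : (∫ ω in A t, (X t ω - c) ∂μ) = (∫ ω in A t, X t ω ∂μ) - c * (μ (A t)).toReal := by
      rw [integral_sub ((hint t).integrableOn) (integrable_const c).integrableOn,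
        setIntegral_const]
      rw [smul_eq_mul, measureReal_def]; ring
    linarith [h1, h2.le, h3, h6.le, h6.ge]
  -- partial sums bound
  have g0 : (∫ ω in A 0, X 0 ω ∂μ) ≤ n := by
    have h1 : (∫ ω in A 0, X 0 ω ∂μ) ≤ ∫ ω, X 0 ω ∂μ :=
      setIntegral_le_integral (hint 0) (Filter.Eventually.of_forall fun ω => hnonneg _ ω)
    have h2 : (∫ ω, X 0 ω ∂μ) = n := by
      rw [integral_congr_ae h0, integral_const]
      simp
    linarith
  have gnonneg : ∀ t, 0 ≤ ∫ ω in A t, X t ω ∂μ := fun t =>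
    setIntegral_nonneg (hAmeas t) fun ω _ => hnonneg t ω
  have partial_sum : ∀ k : ℕ,
      (∫ ω in A k, X k ω ∂μ) + c * ∑ s ∈ Finset.range k, (μ (A s)).toReal ≤ n := by
    intro k
    induction k with
    | zero => simpa using g0
    | succ k ih =>
      have := key k
      rw [Finset.sum_range_succ]
      nlinarith
  have sum_bound : ∀ k : ℕ, ∑ s ∈ Finset.range k, (μ (A s)).toReal ≤ n / c := by
    intro k
    rw [le_div_iff₀ hc]
    have := partial_sum k
    have := gnonneg k
    nlinarith
  -- pointwise identity for the hitting time
  have ptwise : ∀ ω, (⨅ (t : ℕ) (_ : X t ω = 0), (t : ℝ≥0∞))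
      = ∑' t : ℕ, (A t).indicator (fun _ => (1 : ℝ≥0∞)) ω := by
    intro ω
    by_cases h : ∃ t, X t ω = 0
    · set m := Nat.find h with hm
      have hmem : ∀ t, ω ∈ A t ↔ t < m := by
        intro t
        constructor
        · intro hω
          by_contra hlt
          push_neg at hlt
          exact hω m hlt (Nat.find_spec h)
        · intro hlt s hs
          exact Nat.find_min h (lt_of_le_of_lt hs hlt)
      have hL : (⨅ (t : ℕ) (_ : X t ω = 0), (t : ℝ≥0∞)) = (m : ℝ≥0∞) := by
        apply le_antisymm
        · exact iInf₂_le m (Nat.find_spec h)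
        · exact le_iInf₂ fun t ht => Nat.cast_le.mpr (Nat.find_min' h ht)
      have hR : (∑' t : ℕ, (A t).indicator (fun _ => (1 : ℝ≥0∞)) ω) = (m : ℝ≥0∞) := by
        have heq : ∀ t, (A t).indicator (fun _ => (1 : ℝ≥0∞)) ω
            = if t < m then (1 : ℝ≥0∞) else 0 := by
          intro t
          by_cases ht : t < m
          · simp [Set.indicator_of_mem ((hmem t).mpr ht), ht]
          · simp [Set.indicator_of_notMem (fun hmm => ht ((hmem t).mp hmm)), ht]
        calc (∑' t : ℕ, (A t).indicator (fun _ => (1 : ℝ≥0∞)) ω)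
            = ∑' t : ℕ, if t < m then (1 : ℝ≥0∞) else 0 := by
              exact tsum_congr heq
          _ = ∑ t ∈ Finset.range m, (if t < m then (1 : ℝ≥0∞) else 0) := by
              refine tsum_eq_sum ?_
              intro t ht
              simp [Finset.mem_range.not.mp ht]
          _ = (m : ℝ≥0∞) := by
              rw [Finset.sum_ite_of_true (fun t ht => Finset.mem_range.mp ht)]
              simp
      rw [hL, hR]
    · push_neg at h
      have hL : (⨅ (t : ℕ) (_ : X t ω = 0), (t : ℝ≥0∞)) = ⊤ := by
        simp [h]
      have hR : (∑' t : ℕ, (A t).indicator (fun _ => (1 : ℝ≥0∞)) ω) = ⊤ := by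
        have : ∀ t, (A t).indicator (fun _ => (1 : ℝ≥0∞)) ω = 1 := by
          intro t
          exact Set.indicator_of_mem (show ω ∈ A t from fun s _ => h s) _
        rw [tsum_congr this]
        exact ENNReal.tsum_const_eq_top_of_ne_zero one_ne_zero
      rw [hL, hR]
  -- put everything together
  calc ∫⁻ ω, ⨅ (t : ℕ) (_ : X t ω = 0), (t : ℝ≥0∞) ∂μ
      = ∫⁻ ω, ∑' t : ℕ, (A t).indicator (fun _ => (1 : ℝ≥0∞)) ω ∂μ := by
        exact lintegral_congr ptwise
    _ = ∑' t : ℕ, ∫⁻ ω, (A t).indicator (fun _ => (1 : ℝ≥0∞)) ω ∂μ := by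
        refine lintegral_tsum fun t => ?_
        exact ((measurable_const.indicator (hAmeas t))).aemeasurable
    _ = ∑' t : ℕ, μ (A t) := by
        refine tsum_congr fun t => ?_
        simp [lintegral_indicator, hAmeas t]
    _ ≤ ENNReal.ofReal (n / c) := by
        rw [ENNReal.tsum_eq_iSup_sum]
        refine iSup_le fun s => ?_
        obtain ⟨k, hk⟩ : ∃ k, s ⊆ Finset.range k := ⟨s.sup id + 1,
          fun x hx => Finset.mem_range.mpr (Nat.lt_succ_of_le (Finset.le_sup (f := id) hx))⟩
        calc (∑ t ∈ s, μ (A t)) ≤ ∑ t ∈ Finset.range k, μ (A t) :=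
              Finset.sum_le_sum_of_subset hk
          _ = ENNReal.ofReal (∑ t ∈ Finset.range k, (μ (A t)).toReal) := by
              rw [ENNReal.ofReal_sum_of_nonneg (fun t _ => ENNReal.toReal_nonneg)]
              refine Finset.sum_congr rfl fun t _ => ?_
              rw [ENNReal.ofReal_toReal (measure_ne_top μ _)]
          _ ≤ ENNReal.ofReal (n / c) := ENNReal.ofReal_le_ofReal (sum_bound k)
end

section
/- (Variable drift theorem) Let (X_t)_{t≥0} be a stochastic process adapted to a filtration (F_t) with values in {0} ∪ [1, ∞) and X_0 = n almost surely for some n ≥ 1. Suppose there is a positive, monotone increasing function h : [1, ∞) → (0, ∞) such that for all t ≥ 0, almost surely on the event {X_t ≥ 1}, E[X_{t+1} | F_t] ≤ X_t − h(X_t). Let T = inf{t ≥ 0 : X_t = 0}. Then E[T] ≤ 1/h(1) + ∫₁ⁿ 1/h(u) du. -/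
open MeasureTheory
open scoped ENNReal

noncomputable def gfVD (h : ℝ → ℝ) : ℝ → ℝ :=
  fun x => if 1 ≤ x then 1 / h 1 + ∫ u in Set.Icc (1:ℝ) x, 1 / h u else 0

section aux
variable {h : ℝ → ℝ}

lemma htmonoVD (hmono : ∀ x y, 1 ≤ x → x ≤ y → h x ≤ h y) : Monotone (fun u => h (max 1 u)) := by
  intro a b hab
  exact hmono _ _ (le_max_left _ _) (max_le_max le_rfl hab)

lemma integrableOnVD (hpos : ∀ x, 1 ≤ x → 0 < h x) (hmono : ∀ x y, 1 ≤ x → x ≤ y → h x ≤ h y) (s : Set ℝ) (hs : MeasurableSet s) (hfin : volume s ≠ ∞)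
    (hsub : s ⊆ Set.Ici (1:ℝ)) :
    IntegrableOn (fun u => 1 / h u) s volume := by
  have hmeas : Measurable (fun u : ℝ => 1 / h (max 1 u)) := by
    have := (htmonoVD hmono).measurable
    measurability
  have : IntegrableOn (fun u : ℝ => 1 / h (max 1 u)) s volume := by
    haveI : Fact (volume s < ∞) := ⟨lt_top_iff_ne_top.2 hfin⟩
    haveI : IsFiniteMeasure (volume.restrict s) :=
      ⟨by rwa [Measure.restrict_apply_univ, lt_top_iff_ne_top]⟩
    refine Integrable.mono' (integrable_const (1 / h 1)) hmeas.aestronglyMeasurable ?_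
    refine (ae_restrict_iff' hs).2 (Filter.Eventually.of_forall fun u hu => ?_)
    have h1u : (1:ℝ) ≤ u := hsub hu
    rw [max_eq_right h1u]
    have h1 : 0 < h 1 := hpos 1 le_rfl
    have h2 : h 1 ≤ h u := hmono 1 u le_rfl h1u
    have h3 : 0 < h u := lt_of_lt_of_le h1 h2
    rw [Real.norm_eq_abs, abs_of_nonneg (le_of_lt (by positivity))]
    exact one_div_le_one_div_of_le h1 h2
  refine this.congr_fun (fun u hu => ?_) hs
  simp only [max_eq_right (Set.mem_Ici.mp (hsub hu))]

lemma intbound1VD (hpos : ∀ x, 1 ≤ x → 0 < h x) (hmono : ∀ x y, 1 ≤ x → x ≤ y → h x ≤ h y) {x y : ℝ} (hx : 1 ≤ x) (hxy : x ≤ y) :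
    (∫ u in Set.Ioc x y, 1 / h u) ≤ (y - x) / h x := by
  have hmeasset : MeasurableSet (Set.Ioc x y) := measurableSet_Ioc
  have hint : IntegrableOn (fun u => 1 / h u) (Set.Ioc x y) volume :=
    integrableOnVD hpos hmono _ hmeasset (by simp) (fun u hu => le_trans hx (le_of_lt hu.1))
  calc (∫ u in Set.Ioc x y, 1 / h u) ≤ ∫ _ in Set.Ioc x y, 1 / h x := by
        refine setIntegral_mono_on hint (integrable_const _) hmeasset (fun u hu => ?_)
        exact one_div_le_one_div_of_le (hpos x hx) (hmono x u hx (le_of_lt hu.1))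
    _ = (y - x) / h x := by
        rw [setIntegral_const, measureReal_def, Real.volume_Ioc, ENNReal.toReal_ofReal (by linarith)]
        rw [smul_eq_mul]; ring

lemma intbound2VD (hpos : ∀ x, 1 ≤ x → 0 < h x) (hmono : ∀ x y, 1 ≤ x → x ≤ y → h x ≤ h y) {x y : ℝ} (hx : 1 ≤ x) (hxy : x ≤ y) :
    (y - x) / h y ≤ ∫ u in Set.Ioc x y, 1 / h u := by
  have hmeasset : MeasurableSet (Set.Ioc x y) := measurableSet_Ioc
  have hint : IntegrableOn (fun u => 1 / h u) (Set.Ioc x y) volume :=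
    integrableOnVD hpos hmono _ hmeasset (by simp) (fun u hu => le_trans hx (le_of_lt hu.1))
  calc (y - x) / h y = ∫ _ in Set.Ioc x y, 1 / h y := by
        rw [setIntegral_const, measureReal_def, Real.volume_Ioc, ENNReal.toReal_ofReal (by linarith)]
        rw [smul_eq_mul]; ring
    _ ≤ ∫ u in Set.Ioc x y, 1 / h u := by
        refine setIntegral_mono_on (integrable_const _) hint hmeasset (fun u hu => ?_)
        have hy : 1 ≤ y := le_trans hx hxy
        exact one_div_le_one_div_of_le (hpos u (le_trans hx (le_of_lt hu.1)))
          (hmono u y (le_trans hx (le_of_lt hu.1)) hu.2)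

lemma gsplitVD (hpos : ∀ x, 1 ≤ x → 0 < h x) (hmono : ∀ x y, 1 ≤ x → x ≤ y → h x ≤ h y) {x y : ℝ} (hx : 1 ≤ x) (hxy : x ≤ y) :
    gfVD h y = gfVD h x + ∫ u in Set.Ioc x y, 1 / h u := by
  have hy : 1 ≤ y := le_trans hx hxy
  simp only [gfVD, if_pos hx, if_pos hy]
  have hu : Set.Icc (1:ℝ) x ∪ Set.Ioc x y = Set.Icc 1 y := Set.Icc_union_Ioc_eq_Icc hx hxy
  have hdisj : Disjoint (Set.Icc (1:ℝ) x) (Set.Ioc x y) := by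
    refine Set.disjoint_left.2 (fun u hu1 hu2 => ?_)
    exact absurd hu1.2 (not_le.2 hu2.1)
  have h1 : IntegrableOn (fun u => 1 / h u) (Set.Icc 1 x) volume :=
    integrableOnVD hpos hmono _ measurableSet_Icc (by simp) (fun u hu => hu.1)
  have h2 : IntegrableOn (fun u => 1 / h u) (Set.Ioc x y) volume :=
    integrableOnVD hpos hmono _ measurableSet_Ioc (by simp) (fun u hu => le_trans hx (le_of_lt hu.1))
  rw [← hu, setIntegral_union hdisj measurableSet_Ioc h1 h2]
  ring

lemma gnonnegVD (hpos : ∀ x, 1 ≤ x → 0 < h x) (hmono : ∀ x y, 1 ≤ x → x ≤ y → h x ≤ h y) (x : ℝ) : 0 ≤ gfVD h x := by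
  unfold gfVD
  split
  · rename_i hx
    have hh1 : 0 < h 1 := hpos 1 le_rfl
    have h1 : (0:ℝ) ≤ 1 / h 1 := le_of_lt (by positivity)
    have h2 : 0 ≤ ∫ u in Set.Icc (1:ℝ) x, 1 / h u := by
      refine setIntegral_nonneg measurableSet_Icc (fun u hu => ?_)
      have := hpos u hu.1
      positivity
    linarith
  · exact le_rfl

lemma gmonoVD (hpos : ∀ x, 1 ≤ x → 0 < h x) (hmono : ∀ x y, 1 ≤ x → x ≤ y → h x ≤ h y) : Monotone (gfVD h) := by
  intro x y hxy
  by_cases hx : 1 ≤ x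
  · rw [gsplitVD hpos hmono hx hxy]
    have : 0 ≤ ∫ u in Set.Ioc x y, 1 / h u := by
      refine setIntegral_nonneg measurableSet_Ioc (fun u hu => ?_)
      have := hpos u (le_trans hx (le_of_lt hu.1))
      positivity
    linarith
  · rw [show gfVD h x = 0 from if_neg hx]
    exact gnonnegVD hpos hmono y

lemma glinearVD (hpos : ∀ x, 1 ≤ x → 0 < h x) (hmono : ∀ x y, 1 ≤ x → x ≤ y → h x ≤ h y) {x : ℝ} (hx : 1 ≤ x) : gfVD h x ≤ x / h 1 := by
  have := gsplitVD hpos hmono le_rfl hx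
  have h10 : gfVD h 1 = 1 / h 1 := by
    simp [gfVD]
  rw [this, h10]
  have := intbound1VD hpos hmono le_rfl hx
  have hx1 : x / h 1 = 1 / h 1 + (x - 1) / h 1 := by ring
  linarith

lemma glowerVD (hpos : ∀ x, 1 ≤ x → 0 < h x) (hmono : ∀ x y, 1 ≤ x → x ≤ y → h x ≤ h y) {x : ℝ} (hx : 1 ≤ x) : x / h x ≤ gfVD h x := by
  have := gsplitVD hpos hmono le_rfl hx
  have h10 : gfVD h 1 = 1 / h 1 := by simp [gfVD]
  rw [this, h10]
  have hb := intbound2VD hpos hmono le_rfl hx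
  have h1 : 1 / h x ≤ 1 / h 1 := one_div_le_one_div_of_le (hpos 1 le_rfl) (hmono 1 x le_rfl hx)
  have : x / h x = 1 / h x + (x - 1) / h x := by ring
  linarith

lemma keyVD (hpos : ∀ x, 1 ≤ x → 0 < h x) (hmono : ∀ x y, 1 ≤ x → x ≤ y → h x ≤ h y) {x y : ℝ} (hx : 1 ≤ x) (hy : y = 0 ∨ 1 ≤ y) :
    gfVD h y ≤ gfVD h x + (y - x) / h x := by
  rcases hy with hy | hy
  · subst hy
    rw [show gfVD h (0:ℝ) = 0 from if_neg (by norm_num)]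
    have := glowerVD hpos hmono hx
    have : (0 - x) / h x = -(x / h x) := by ring
    linarith [glowerVD hpos hmono hx]
  · rcases le_total x y with hxy | hxy
    · rw [gsplitVD hpos hmono hx hxy]
      have := intbound1VD hpos hmono hx hxy
      linarith
    · rw [gsplitVD hpos hmono hy hxy]
      have hb := intbound2VD hpos hmono hy hxy
      have hxx : 1 ≤ x := hx
      have : (y - x) / h x = -((x - y) / h x) := by ring
      linarith

lemma gmeasVD (hpos : ∀ x, 1 ≤ x → 0 < h x) (hmono : ∀ x y, 1 ≤ x → x ≤ y → h x ≤ h y) : Measurable (gfVD h) := (gmonoVD hpos hmono).measurable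

end aux

/-- Variable drift theorem: if an adapted integrable process with values in `{0} ∪ [1, ∞)`
starts at `n ≥ 1` and, on the event `X_t ≥ 1`, satisfies `E[X_{t+1} | F_t] ≤ X_t - h(X_t)`
for a positive increasing function `h` on `[1, ∞)`, then the first hitting time `T` of `0`
satisfies `E[T] ≤ 1/h(1) + ∫₁ⁿ 1/h(u) du`. -/
theorem variable_drift_theorem
    {Ω : Type*} {mΩ : MeasurableSpace Ω} (μ : Measure Ω) [IsProbabilityMeasure μ]
    (F : Filtration ℕ mΩ)
    (X : ℕ → Ω → ℝ) (hadp : Adapted F X)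
    (hint : ∀ t, Integrable (X t) μ)
    (hrange : ∀ t ω, X t ω = 0 ∨ 1 ≤ X t ω)
    (n : ℝ) (hn : 1 ≤ n) (h0 : ∀ᵐ ω ∂μ, X 0 ω = n)
    (h : ℝ → ℝ)
    (hpos : ∀ x, 1 ≤ x → 0 < h x)
    (hmono : ∀ x y, 1 ≤ x → x ≤ y → h x ≤ h y)
    (hdrift : ∀ t : ℕ, ∀ᵐ ω ∂μ, 1 ≤ X t ω → (μ[X (t + 1) | F t]) ω ≤ X t ω - h (X t ω)) :
    ∫⁻ ω, ⨅ (t : ℕ) (_ : X t ω = 0), (t : ℝ≥0∞) ∂μ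
      ≤ ENNReal.ofReal (1 / h 1 + ∫ u in Set.Icc (1 : ℝ) n, 1 / h u) := by
  have hh1 : 0 < h 1 := hpos 1 le_rfl
  set g := gfVD h with hgdef
  -- the events "not yet absorbed"
  set A : ℕ → Set Ω := fun t => {ω | ∀ s ≤ t, 1 ≤ X s ω} with hAdef
  -- basic measurability
  have hXsm : ∀ s, StronglyMeasurable (X s) := fun s => ((hadp s).mono (F.le s) le_rfl).stronglyMeasurable
  have hXm : ∀ s, Measurable (X s) := fun s => (hXsm s).measurable
  have hAmF : ∀ t, MeasurableSet[F t] (A t) := by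
    intro t
    have : A t = ⋂ s ∈ Finset.range (t + 1), X s ⁻¹' Set.Ici 1 := by
      ext ω; simp [hAdef, Nat.lt_succ_iff, Set.mem_iInter]
    rw [this]
    refine MeasurableSet.biInter (Set.to_countable _) (fun s hs => ?_)
    have hst : s ≤ t := Nat.lt_succ_iff.mp (Finset.mem_range.mp hs)
    exact ((hadp s).mono (F.mono hst) le_rfl) measurableSet_Ici
  have hAm : ∀ t, MeasurableSet (A t) := fun t => (F.le t) _ (hAmF t)
  have hAanti : ∀ t, A (t + 1) ⊆ A t := by
    intro t ω hω s hs; exact hω s (hs.trans (Nat.le_succ t))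
  have hAX : ∀ t ω, ω ∈ A t → 1 ≤ X t ω := fun t ω hω => hω t le_rfl
  have hgnn : ∀ x, 0 ≤ g x := gnonnegVD hpos hmono
  -- integrability of g ∘ X t
  have hgint : ∀ t, Integrable (fun ω => g (X t ω)) μ := by
    intro t
    refine Integrable.mono' (((hint t).norm).const_mul (1 / h 1))
      ((gmeasVD hpos hmono).comp (hXm t)).aestronglyMeasurable
      (Filter.Eventually.of_forall fun ω => ?_)
    rw [Real.norm_eq_abs, abs_of_nonneg (hgnn _)]
    rcases hrange t ω with h0' | h1'
    · rw [h0', show g (0:ℝ) = 0 from if_neg (by norm_num)]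
      positivity
    · calc g (X t ω) ≤ X t ω / h 1 := glinearVD hpos hmono h1'
        _ ≤ 1 / h 1 * ‖X t ω‖ := by
            rw [Real.norm_eq_abs, abs_of_nonneg (by linarith)]; rw [div_eq_mul_inv, div_eq_mul_inv]
            ring_nf; exact le_rfl
  -- the descent step
  have step : ∀ t, ∫ ω, (A (t+1)).indicator (fun ω => g (X (t+1) ω)) ω ∂μ + (μ (A t)).toReal
      ≤ ∫ ω, (A t).indicator (fun ω => g (X t ω)) ω ∂μ := by
    intro t
    haveI : SigmaFinite (μ.trim (F.le t)) := by infer_instance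
    set c : Ω → ℝ := (A t).indicator (fun ω => (h (max 1 (X t ω)))⁻¹) with hcdef
    have hceq : ∀ ω ∈ A t, c ω = (h (X t ω))⁻¹ := by
      intro ω hω
      rw [hcdef, Set.indicator_of_mem hω, max_eq_right (hAX t ω hω)]
    have hc0 : ∀ ω, ω ∉ A t → c ω = 0 := fun ω hω => Set.indicator_of_notMem hω _
    have hcnn : ∀ ω, 0 ≤ c ω := by
      intro ω
      by_cases hω : ω ∈ A t
      · rw [hceq ω hω]
        have := hpos _ (hAX t ω hω); positivity
      · rw [hc0 ω hω]
    have hcb : ∀ ω, c ω ≤ (h 1)⁻¹ := by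
      intro ω
      by_cases hω : ω ∈ A t
      · rw [hceq ω hω]
        exact inv_anti₀ hh1 (hmono 1 _ le_rfl (hAX t ω hω))
      · rw [hc0 ω hω]; positivity
    have hcsmF : StronglyMeasurable[F t] c := by
      refine StronglyMeasurable.indicator ?_ (hAmF t)
      have : Measurable[F t] (fun ω => (h (max 1 (X t ω)))⁻¹) :=
        ((htmonoVD hmono).measurable.comp (hadp t)).inv
      exact this.stronglyMeasurable
    have hcm : Measurable c := (hcsmF.mono (F.le t)).measurable
    -- integrability of c * X s
    have hcXint : ∀ s, Integrable (fun ω => c ω * X s ω) μ := by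
      intro s
      refine Integrable.mono' (((hint s).norm).const_mul ((h 1)⁻¹))
        ((hcm.mul (hXm s)).aestronglyMeasurable)
        (Filter.Eventually.of_forall fun ω => ?_)
      rw [norm_mul, Real.norm_eq_abs (c ω), abs_of_nonneg (hcnn ω)]
      exact mul_le_mul_of_nonneg_right (hcb ω) (norm_nonneg _)
    -- pointwise key inequality
    have hkey : ∀ ω, (A t).indicator (fun ω => g (X (t+1) ω)) ω ≤
        ((A t).indicator (fun ω => g (X t ω)) ω - c ω * X t ω) + c ω * X (t+1) ω := by
      intro ω
      by_cases hω : ω ∈ A t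
      · rw [Set.indicator_of_mem hω, Set.indicator_of_mem hω, hceq ω hω]
        have hx := hAX t ω hω
        have hk := keyVD hpos hmono hx (hrange (t+1) ω)
        have hne : h (X t ω) ≠ 0 := ne_of_gt (hpos _ hx)
        have : (X (t+1) ω - X t ω) / h (X t ω)
            = (h (X t ω))⁻¹ * X (t+1) ω - (h (X t ω))⁻¹ * X t ω := by
          field_simp
        rw [this] at hk
        show g (X (t+1) ω) ≤ _
        rw [hgdef]
        linarith
      · rw [Set.indicator_of_notMem hω, Set.indicator_of_notMem hω, hc0 ω hω]
        simp
    -- pull-out of conditional expectation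
    have hpull : ∫ ω, c ω * X (t+1) ω ∂μ = ∫ ω, c ω * (μ[X (t+1) | F t]) ω ∂μ := by
      have h1 : μ[(fun ω => c ω * X (t+1) ω) | F t] =ᵐ[μ] fun ω => c ω * (μ[X (t+1) | F t]) ω :=
        condExp_mul_of_stronglyMeasurable_left hcsmF (hcXint (t+1)) (hint (t+1))
      calc ∫ ω, c ω * X (t+1) ω ∂μ = ∫ ω, (μ[(fun ω => c ω * X (t+1) ω) | F t]) ω ∂μ :=
            (integral_condExp (F.le t)).symm
        _ = ∫ ω, c ω * (μ[X (t+1) | F t]) ω ∂μ := integral_congr_ae h1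
    -- drift applied
    have hcondint : Integrable (fun ω => c ω * (μ[X (t+1) | F t]) ω) μ := by
      have hic : Integrable (μ[X (t+1) | F t]) μ := integrable_condExp
      refine Integrable.mono' ((hic.norm).const_mul ((h 1)⁻¹))
        (hcm.aestronglyMeasurable.mul hic.aestronglyMeasurable)
        (Filter.Eventually.of_forall fun ω => ?_)
      rw [norm_mul, Real.norm_eq_abs (c ω), abs_of_nonneg (hcnn ω)]
      exact mul_le_mul_of_nonneg_right (hcb ω) (norm_nonneg _)
    have hdriftint : ∫ ω, c ω * (μ[X (t+1) | F t]) ω ∂μ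
        ≤ ∫ ω, (c ω * X t ω - (A t).indicator (fun _ => (1:ℝ)) ω) ∂μ := by
      refine integral_mono_ae hcondint ((hcXint t).sub ((integrable_const (1:ℝ)).indicator (hAm t))) ?_
      filter_upwards [hdrift t] with ω hω
      by_cases hmem : ω ∈ A t
      · have hx := hAX t ω hmem
        have hd := hω hx
        rw [Set.indicator_of_mem hmem]
        have h1 : c ω * (μ[X (t+1) | F t]) ω ≤ c ω * (X t ω - h (X t ω)) :=
          mul_le_mul_of_nonneg_left hd (hcnn ω)
        have h2 : c ω * (X t ω - h (X t ω)) = c ω * X t ω - 1 := by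
          rw [hceq ω hmem]
          have hne : h (X t ω) ≠ 0 := ne_of_gt (hpos _ hx)
          field_simp
        linarith
      · rw [hc0 ω hmem, Set.indicator_of_notMem hmem]
        simp
    -- integrability of the subtracted function
    have hIsub : Integrable (fun ω => (A t).indicator (fun ω => g (X t ω)) ω - c ω * X t ω) μ :=
      ((hgint t).indicator (hAm t)).sub (hcXint t)
    -- chain of inequalities
    have hmono1 : ∫ ω, (A (t+1)).indicator (fun ω => g (X (t+1) ω)) ω ∂μ
        ≤ ∫ ω, (A t).indicator (fun ω => g (X (t+1) ω)) ω ∂μ := by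
      refine integral_mono ((hgint (t+1)).indicator (hAm (t+1))) ((hgint (t+1)).indicator (hAm t)) ?_
      exact Set.indicator_le_indicator_of_subset (hAanti t) (fun ω => hgnn _)
    have hmono2 : ∫ ω, (A t).indicator (fun ω => g (X (t+1) ω)) ω ∂μ
        ≤ ∫ ω, ((A t).indicator (fun ω => g (X t ω)) ω - c ω * X t ω) ∂μ
          + ∫ ω, c ω * X (t+1) ω ∂μ := by
      rw [← integral_add hIsub (hcXint (t+1))]
      exact integral_mono ((hgint (t+1)).indicator (hAm t)) (hIsub.add (hcXint (t+1)))
        (fun ω => hkey ω)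
    have hmono3 : ∫ ω, c ω * X (t+1) ω ∂μ
        ≤ ∫ ω, c ω * X t ω ∂μ - (μ (A t)).toReal := by
      rw [hpull]
      refine le_trans hdriftint ?_
      rw [integral_sub (hcXint t) ((integrable_const (1:ℝ)).indicator (hAm t))]
      have : ∫ ω, (A t).indicator (fun _ => (1:ℝ)) ω ∂μ = (μ (A t)).toReal := by
        rw [integral_indicator_const (1:ℝ) (hAm t)]; simp [measureReal_def]
      rw [this]
    have hsub : ∫ ω, ((A t).indicator (fun ω => g (X t ω)) ω - c ω * X t ω) ∂μ
        = ∫ ω, (A t).indicator (fun ω => g (X t ω)) ω ∂μ - ∫ ω, c ω * X t ω ∂μ :=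
      integral_sub ((hgint t).indicator (hAm t)) (hcXint t)
    linarith [hmono1, hmono2, hmono3, hsub]
  set P : ℕ → ℝ := fun t => (μ (A t)).toReal with hPdef
  have hr0 : ∀ m, 0 ≤ ∫ ω, (A m).indicator (fun ω => g (X m ω)) ω ∂μ := by
    intro m
    exact integral_nonneg fun ω => Set.indicator_nonneg (fun ω _ => hgnn _) ω
  have hind : ∀ m, (∑ t ∈ Finset.range m, P t)
      + ∫ ω, (A m).indicator (fun ω => g (X m ω)) ω ∂μ
      ≤ ∫ ω, (A 0).indicator (fun ω => g (X 0 ω)) ω ∂μ := by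
    intro m
    induction m with
    | zero => simp
    | succ m ih =>
      rw [Finset.sum_range_succ]
      have := step m
      linarith
  have hr0top : ∫ ω, (A 0).indicator (fun ω => g (X 0 ω)) ω ∂μ ≤ g n := by
    have h1 : ∫ ω, (A 0).indicator (fun ω => g (X 0 ω)) ω ∂μ ≤ ∫ ω, g (X 0 ω) ∂μ := by
      refine integral_mono ((hgint 0).indicator (hAm 0)) (hgint 0) ?_
      exact Set.indicator_le_self' (fun ω _ => hgnn _)
    have h2 : ∫ ω, g (X 0 ω) ∂μ = g n := by
      rw [integral_congr_ae (h0.mono fun ω hω => by rw [hω])]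
      simp
    linarith
  have hsum : ∀ m, ∑ t ∈ Finset.range m, P t ≤ g n := by
    intro m
    have h1 := hind m
    have h2 := hr0 m
    linarith
  have htsum : (∑' t, μ (A t)) ≤ ENNReal.ofReal (g n) := by
    rw [ENNReal.tsum_eq_iSup_sum]
    refine iSup_le fun s => ?_
    obtain ⟨m, hm⟩ : ∃ m, s ⊆ Finset.range m :=
      ⟨(s.sup id) + 1, fun x hx => Finset.mem_range.2 (Nat.lt_succ_of_le (Finset.le_sup (f := id) hx))⟩
    calc ∑ t ∈ s, μ (A t) ≤ ∑ t ∈ Finset.range m, μ (A t) :=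
          Finset.sum_le_sum_of_subset hm
      _ = ENNReal.ofReal (∑ t ∈ Finset.range m, P t) := by
          rw [ENNReal.ofReal_sum_of_nonneg (fun t _ => ENNReal.toReal_nonneg)]
          exact Finset.sum_congr rfl fun t _ => (ENNReal.ofReal_toReal (measure_ne_top μ _)).symm
      _ ≤ ENNReal.ofReal (g n) := ENNReal.ofReal_le_ofReal (hsum m)
  have hpoint : ∀ ω, (⨅ (t : ℕ) (_ : X t ω = 0), (t : ℝ≥0∞))
      = ∑' t, (A t).indicator (fun _ => (1:ℝ≥0∞)) ω := by
    intro ω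
    by_cases hex : ∃ t, X t ω = 0
    · set k := Nat.find hex with hkdef
      have hXk : X k ω = 0 := Nat.find_spec hex
      have hmemiff : ∀ t, ω ∈ A t ↔ t < k := by
        intro t
        constructor
        · intro hω
          by_contra hkt
          push_neg at hkt
          have := hω k hkt
          rw [hXk] at this; linarith
        · intro htk s hst
          have hs : s < k := lt_of_le_of_lt hst htk
          rcases hrange s ω with h' | h'
          · exact absurd h' (Nat.find_min hex hs)
          · exact h'
      have hleft : (⨅ (t : ℕ) (_ : X t ω = 0), (t : ℝ≥0∞)) = (k : ℝ≥0∞) := by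
        apply le_antisymm
        · exact iInf_le_of_le k (iInf_le _ hXk)
        · refine le_iInf fun t => le_iInf fun ht => ?_
          exact_mod_cast Nat.cast_le.2 (Nat.find_min' hex ht)
      rw [hleft]
      have hiff : ∀ t, (A t).indicator (fun _ => (1:ℝ≥0∞)) ω = if t < k then 1 else 0 := by
        intro t
        by_cases htk : t < k
        · rw [if_pos htk, Set.indicator_of_mem ((hmemiff t).2 htk)]
        · rw [if_neg htk, Set.indicator_of_notMem (fun hmem => htk ((hmemiff t).1 hmem))]
      rw [tsum_congr hiff,
        tsum_eq_sum (s := Finset.range k)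
          (fun t ht => if_neg (fun hlt => ht (Finset.mem_range.2 hlt))),
        Finset.sum_congr rfl (fun t ht => if_pos (Finset.mem_range.1 ht)),
        Finset.sum_const, Finset.card_range, nsmul_eq_mul, mul_one]
    · push_neg at hex
      have hA : ∀ t, ω ∈ A t := fun t s hst => (hrange s ω).resolve_left (hex s)
      have h1 : ∀ t : ℕ, (⨅ (_ : X t ω = 0), (t : ℝ≥0∞)) = ⊤ := fun t => iInf_neg (hex t)
      simp only [h1, iInf_top]
      have h2 : ∀ t, (A t).indicator (fun _ => (1:ℝ≥0∞)) ω = 1 :=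
        fun t => Set.indicator_of_mem (hA t) _
      rw [tsum_congr h2]
      exact (ENNReal.tsum_const_eq_top_of_ne_zero one_ne_zero).symm
  calc ∫⁻ ω, ⨅ (t : ℕ) (_ : X t ω = 0), (t : ℝ≥0∞) ∂μ
      = ∑' t, μ (A t) := by
        rw [lintegral_congr hpoint,
          lintegral_tsum (fun t => ((measurable_const.indicator (hAm t)).aemeasurable))]
        exact tsum_congr fun t => lintegral_indicator_one (hAm t)
    _ ≤ ENNReal.ofReal (g n) := htsum
    _ = ENNReal.ofReal (1 / h 1 + ∫ u in Set.Icc (1 : ℝ) n, 1 / h u) := by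
        rw [hgdef]; unfold gfVD; rw [if_pos hn]
end

section
/- Let N ≥ 2, let g and ζ be unit vectors in ℝᴺ with x = ⟨g, ζ⟩, and let α ∈ [0, 1]. Let w be a random vector distributed according to the uniform probability measure on the sphere of radius √(1−α²) in the orthogonal complement of g, and set g' = α·g + w (so g' is almost surely a unit vector). Then E[⟨g', ζ⟩²] = α²x² + (1 − α²)(1 − x²)/(N − 1). -/
open scoped RealInnerProductSpace
open MeasureTheory

/-- For unit vectors `g, ζ` with `x = ⟨g, ζ⟩`, `α ∈ [0,1]`, and a random vector `w`
uniformly distributed (invariant under all rotations fixing `g`) on the sphere of radius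
`√(1-α²)` in the orthogonal complement of `g`, the random unit vector `g' = α g + w`
satisfies `E[⟨g', ζ⟩²] = α² x² + (1-α²)(1-x²)/(N-1)`. -/
theorem expected_inner_sq_perturbed_gradient
    (N : ℕ) (hN : 2 ≤ N)
    {Ω : Type*} [MeasureSpace Ω] [IsProbabilityMeasure (volume : Measure Ω)]
    (g ζ : EuclideanSpace ℝ (Fin N)) (hg : ‖g‖ = 1) (hζ : ‖ζ‖ = 1)
    (x : ℝ) (hx : x = ⟪g, ζ⟫)
    (α : ℝ) (hα : α ∈ Set.Icc (0 : ℝ) 1)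
    (w : Ω → EuclideanSpace ℝ (Fin N)) (hmeas : Measurable w)
    (hval : ∀ᵐ ω, ‖w ω‖ = Real.sqrt (1 - α ^ 2) ∧ ⟪w ω, g⟫ = 0)
    (hinv : ∀ R : EuclideanSpace ℝ (Fin N) ≃ₗᵢ[ℝ] EuclideanSpace ℝ (Fin N), R g = g →
      Measure.map (fun y => R y) (Measure.map w volume) = Measure.map w volume) :
    ∫ ω, ⟪α • g + w ω, ζ⟫ ^ 2
      = α ^ 2 * x ^ 2 + (1 - α ^ 2) * (1 - x ^ 2) / ((N : ℝ) - 1) := by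
  haveI : NeZero N := ⟨by omega⟩
  obtain ⟨hα0, hα1⟩ := hα
  have hα2 : (0:ℝ) ≤ 1 - α ^ 2 := by nlinarith
  have hN1 : (1:ℝ) ≤ (N:ℝ) - 1 := by
    have : (2:ℝ) ≤ (N:ℝ) := by exact_mod_cast hN
    linarith
  -- invariance of integrals under isometries fixing g
  have key : ∀ (R : EuclideanSpace ℝ (Fin N) ≃ₗᵢ[ℝ] EuclideanSpace ℝ (Fin N)), R g = g →
      ∀ f : EuclideanSpace ℝ (Fin N) → ℝ, Continuous f →
      ∫ ω, f (R (w ω)) = ∫ ω, f (w ω) := by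
    intro R hR f hf
    have h1 : ∫ ω, f (w ω) = ∫ y, f y ∂(Measure.map w volume) :=
      (integral_map hmeas.aemeasurable hf.aestronglyMeasurable).symm
    have h3 : ∫ y, f y ∂(Measure.map (fun y => R y) (Measure.map w volume))
        = ∫ y, f (R y) ∂(Measure.map w volume) :=
      integral_map (R.continuous.measurable.aemeasurable) hf.aestronglyMeasurable
    have h4 : ∫ y, f (R y) ∂(Measure.map w volume) = ∫ ω, f (R (w ω)) :=
      integral_map hmeas.aemeasurable ((hf.comp R.continuous).aestronglyMeasurable)
    rw [h1, ← hinv R hR, h3, h4]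
  -- measurability and integrability of inner products with w
  have hsm : ∀ v : EuclideanSpace ℝ (Fin N),
      AEStronglyMeasurable (fun ω => ⟪w ω, v⟫) volume :=
    fun v => (((continuous_id.inner continuous_const).measurable).comp hmeas).aestronglyMeasurable
  have hbd : ∀ v : EuclideanSpace ℝ (Fin N), ∀ᵐ ω, ‖⟪w ω, v⟫‖ ≤ ‖v‖ := by
    intro v
    filter_upwards [hval] with ω hω
    calc ‖⟪w ω, v⟫‖ ≤ ‖w ω‖ * ‖v‖ := by
          rw [Real.norm_eq_abs]; exact abs_real_inner_le_norm _ _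
      _ ≤ 1 * ‖v‖ := by
          apply mul_le_mul_of_nonneg_right _ (norm_nonneg v)
          rw [hω.1]; exact Real.sqrt_le_one.2 (by nlinarith)
      _ = ‖v‖ := one_mul _
  have hint1 : ∀ v : EuclideanSpace ℝ (Fin N),
      Integrable (fun ω => ⟪w ω, v⟫) volume := by
    intro v
    exact (integrable_const ‖v‖).mono' (hsm v) (hbd v)
  have hint2 : ∀ v : EuclideanSpace ℝ (Fin N),
      Integrable (fun ω => ⟪w ω, v⟫ ^ 2) volume := by
    intro v
    refine (integrable_const (‖v‖^2)).mono' ((hsm v).pow 2) ?_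
    filter_upwards [hbd v] with ω hω
    rw [norm_pow]
    exact pow_le_pow_left₀ (norm_nonneg _) hω 2
  -- first moment vanishes in directions orthogonal to g
  have momA : ∀ v : EuclideanSpace ℝ (Fin N), ⟪v, g⟫ = 0 → (∫ ω, ⟪w ω, v⟫) = 0 := by
    intro v hv
    set K : Submodule ℝ (EuclideanSpace ℝ (Fin N)) := ℝ ∙ g with hK
    have hRg : Submodule.reflection K g = g :=
      Submodule.reflection_mem_subspace_eq_self (Submodule.mem_span_singleton_self g)
    have hvK : v ∈ Kᗮ := Submodule.mem_orthogonal_singleton_iff_inner_left.2 hv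
    have hRv : Submodule.reflection K v = -v :=
      Submodule.reflection_mem_subspace_orthogonalComplement_eq_neg hvK
    have hkey := key (Submodule.reflection K) hRg (fun y => ⟪y, v⟫)
      (continuous_id.inner continuous_const)
    have heq : ∀ y : EuclideanSpace ℝ (Fin N), ⟪(Submodule.reflection K) y, v⟫ = -⟪y, v⟫ := by
      intro y
      have : ⟪(Submodule.reflection K) y, (Submodule.reflection K) v⟫ = ⟪y, v⟫ :=
        LinearIsometryEquiv.inner_map_map _ _ _
      rw [hRv, inner_neg_right] at this
      linarith
    simp only [heq, integral_neg] at hkey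
    linarith
  -- construct orthonormal bases with prescribed first two vectors
  have hcard : Module.finrank ℝ (EuclideanSpace ℝ (Fin N)) = Fintype.card (Fin N) := by
    simp [finrank_euclideanSpace_fin]
  have h01 : (0 : Fin N) ≠ 1 := by
    intro h
    have h' := congrArg Fin.val h
    rw [Fin.val_zero, Fin.val_one' N, Nat.mod_eq_of_lt (by omega)] at h'
    exact absurd h' (by omega)
  have hpair : ∀ a : EuclideanSpace ℝ (Fin N), ‖a‖ = 1 → ⟪a, g⟫ = 0 →
      ∃ b : OrthonormalBasis (Fin N) ℝ (EuclideanSpace ℝ (Fin N)), b 0 = g ∧ b 1 = a := by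
    intro a ha hag
    set f1 : Fin N → EuclideanSpace ℝ (Fin N) := fun i => if i = 0 then g else a with hf1
    have horth : Orthonormal ℝ (({0, 1} : Set (Fin N)).restrict f1) := by
      rw [orthonormal_iff_ite]
      have hgg : ⟪g, g⟫ = 1 := by
        rw [real_inner_self_eq_norm_sq, hg]; norm_num
      have haa : ⟪a, a⟫ = 1 := by
        rw [real_inner_self_eq_norm_sq, ha]; norm_num
      have hga : ⟪g, a⟫ = 0 := by rw [real_inner_comm]; exact hag
      rintro ⟨i, hi⟩ ⟨j, hj⟩
      simp only [Set.mem_insert_iff, Set.mem_singleton_iff] at hi hj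
      simp only [Set.restrict_apply, Subtype.mk.injEq]
      rcases hi with rfl | rfl <;> rcases hj with rfl | rfl <;>
        simp only [f1, if_pos rfl, if_neg h01, if_neg h01.symm, hgg, haa, hga, hag] <;>
        simp [Set.restrict, h01, h01.symm, hgg, haa, hga, hag, hg, ha]
    obtain ⟨b, hb⟩ := horth.exists_orthonormalBasis_extension_of_card_eq hcard
    refine ⟨b, ?_, ?_⟩
    · have := hb 0 (by simp)
      simpa [f1] using this
    · have := hb 1 (by simp)
      simpa [f1, h01.symm] using this
  -- second moments agree in all unit directions orthogonal to g
  have momB : ∀ u v : EuclideanSpace ℝ (Fin N), ‖u‖ = 1 → ‖v‖ = 1 →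
      ⟪u, g⟫ = 0 → ⟪v, g⟫ = 0 →
      (∫ ω, ⟪w ω, u⟫ ^ 2) = ∫ ω, ⟪w ω, v⟫ ^ 2 := by
    intro u v hu hv hug hvg
    obtain ⟨b, hb0, hb1⟩ := hpair u hu hug
    obtain ⟨c, hc0, hc1⟩ := hpair v hv hvg
    set R := b.repr.trans c.repr.symm with hRdef
    have hR : ∀ i, R (b i) = c i := by
      intro i
      simp [hRdef, LinearIsometryEquiv.trans_apply, b.repr_self, c.repr_symm_single]
    have hRg : R g = g := by conv_lhs => rw [← hb0, hR, hc0]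
    have hRu : R u = v := by rw [← hb1, hR, hc1]
    have hkey := key R hRg (fun y => ⟪y, v⟫ ^ 2)
      ((continuous_id.inner continuous_const).pow 2)
    have heq : ∀ y : EuclideanSpace ℝ (Fin N), ⟪R y, v⟫ = ⟪y, u⟫ := by
      intro y
      rw [← hRu]
      exact LinearIsometryEquiv.inner_map_map _ _ _
    simp only [heq] at hkey
    exact hkey
  -- compute the common second moment
  have hsing : Orthonormal ℝ (({0} : Set (Fin N)).restrict
      (fun _ : Fin N => g)) := by
    rw [orthonormal_iff_ite]
    have hgg : ⟪g, g⟫ = 1 := by rw [real_inner_self_eq_norm_sq, hg]; norm_num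
    rintro ⟨i, hi⟩ ⟨j, hj⟩
    simp only [Set.mem_singleton_iff] at hi hj
    subst hi; subst hj
    simpa [Set.restrict] using hgg
  obtain ⟨b, hb⟩ := hsing.exists_orthonormalBasis_extension_of_card_eq hcard
  have hb0 : b 0 = g := by simpa using hb 0 (by simp)
  have hunit : ∀ i : Fin N, ‖b i‖ = 1 := b.orthonormal.1
  have hbg : ∀ i : Fin N, i ≠ 0 → ⟪b i, g⟫ = 0 := by
    intro i hi; rw [← hb0]; exact b.orthonormal.2 hi
  set c2 : ℝ := ∫ ω, ⟪w ω, b 1⟫ ^ 2 with hc2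
  have hci : ∀ i : Fin N, i ≠ 0 → (∫ ω, ⟪w ω, b i⟫ ^ 2) = c2 := fun i hi =>
    momB (b i) (b 1) (hunit i) (hunit 1) (hbg i hi) (hbg 1 h01.symm)
  have hsum : (∫ ω, ∑ i : Fin N, ⟪w ω, b i⟫ ^ 2) = 1 - α ^ 2 := by
    have hae : (fun ω => ∑ i : Fin N, ⟪w ω, b i⟫ ^ 2)
        =ᵐ[volume] fun _ => 1 - α ^ 2 := by
      filter_upwards [hval] with ω hω
      have hsi : ∑ i, ⟪w ω, b i⟫ * ⟪b i, w ω⟫ = ⟪w ω, w ω⟫ := b.sum_inner_mul_inner _ _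
      calc ∑ i : Fin N, ⟪w ω, b i⟫ ^ 2 = ∑ i, ⟪w ω, b i⟫ * ⟪b i, w ω⟫ := by
            refine Finset.sum_congr rfl fun i _ => ?_
            rw [sq, real_inner_comm (b i) (w ω)]
        _ = ⟪w ω, w ω⟫ := hsi
        _ = 1 - α ^ 2 := by
            rw [real_inner_self_eq_norm_sq, hω.1, Real.sq_sqrt hα2]
    rw [integral_congr_ae hae]
    simp
  have hswap : (∫ ω, ∑ i : Fin N, ⟪w ω, b i⟫ ^ 2)
      = ∑ i : Fin N, ∫ ω, ⟪w ω, b i⟫ ^ 2 :=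
    integral_finset_sum _ (fun i _ => hint2 (b i))
  have hzero0 : (∫ ω, ⟪w ω, b 0⟫ ^ 2) = 0 := by
    have hae : (fun ω => ⟪w ω, b 0⟫ ^ 2) =ᵐ[volume] fun _ => (0:ℝ) := by
      filter_upwards [hval] with ω hω
      rw [hb0, hω.2]; norm_num
    rw [integral_congr_ae hae]; simp
  have hsum2 : ∑ i : Fin N, ∫ ω, ⟪w ω, b i⟫ ^ 2 = ((N:ℝ) - 1) * c2 := by
    rw [← Finset.add_sum_erase _ _ (Finset.mem_univ (0 : Fin N)), hzero0, zero_add]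
    rw [Finset.sum_congr rfl (fun i hi => hci i (Finset.ne_of_mem_erase hi))]
    rw [Finset.sum_const, Finset.card_erase_of_mem (Finset.mem_univ _),
      Finset.card_univ, Fintype.card_fin, nsmul_eq_mul]
    congr 1
    rw [Nat.cast_sub (le_trans one_le_two hN), Nat.cast_one]
  have hne : ((N:ℝ) - 1) ≠ 0 := by linarith
  have hc2val : c2 = (1 - α ^ 2) / ((N:ℝ) - 1) := by
    have h : ((N:ℝ) - 1) * c2 = 1 - α ^ 2 := by rw [← hsum2, ← hswap, hsum]
    rw [eq_div_iff hne, mul_comm]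
    exact h
  have momC : ∀ u : EuclideanSpace ℝ (Fin N), ‖u‖ = 1 → ⟪u, g⟫ = 0 →
      (∫ ω, ⟪w ω, u⟫ ^ 2) = (1 - α ^ 2) / ((N:ℝ) - 1) := by
    intro u hu hug
    rw [momB u (b 1) hu (hunit 1) hug (hbg 1 h01.symm), ← hc2]
    exact hc2val
  -- decompose ζ
  set ζp : EuclideanSpace ℝ (Fin N) := ζ - x • g with hζp
  have hgg : ⟪g, g⟫ = 1 := by rw [real_inner_self_eq_norm_sq, hg]; norm_num
  have hζg : ⟪ζ, g⟫ = x := by rw [real_inner_comm]; exact hx.symm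
  have hζpg : ⟪ζp, g⟫ = 0 := by
    rw [hζp, inner_sub_left, real_inner_smul_left, hζg, hgg, mul_one, sub_self]
  have hζpn : ‖ζp‖ ^ 2 = 1 - x ^ 2 := by
    have hζζ : ⟪ζ, ζ⟫ = 1 := by rw [real_inner_self_eq_norm_sq, hζ]; norm_num
    have hgζ : ⟪g, ζ⟫ = x := hx.symm
    rw [← real_inner_self_eq_norm_sq]
    simp only [hζp, inner_sub_left, inner_sub_right, real_inner_smul_left,
      real_inner_smul_right, hgg, hζζ, hgζ, hζg]
    ring
  have I1 : (∫ ω, ⟪w ω, ζp⟫) = 0 := momA ζp hζpg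
  have I2 : (∫ ω, ⟪w ω, ζp⟫ ^ 2) = (1 - x ^ 2) * ((1 - α ^ 2) / ((N:ℝ) - 1)) := by
    by_cases hz : ζp = 0
    · have hx2 : 1 - x ^ 2 = 0 := by rw [← hζpn, hz]; simp
      simp [hz, hx2]
    · set u : EuclideanSpace ℝ (Fin N) := ‖ζp‖⁻¹ • ζp with hu
      have hζpne : ‖ζp‖ ≠ 0 := norm_ne_zero_iff.2 hz
      have hun : ‖u‖ = 1 := by
        rw [hu, norm_smul, norm_inv, norm_norm, inv_mul_cancel₀ hζpne]
      have hug : ⟪u, g⟫ = 0 := by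
        rw [hu, real_inner_smul_left, hζpg, mul_zero]
      have hrw : ∀ ω, ⟪w ω, ζp⟫ ^ 2 = ‖ζp‖ ^ 2 * ⟪w ω, u⟫ ^ 2 := by
        intro ω
        have hζpu : ζp = ‖ζp‖ • u := by
          rw [hu, smul_smul, mul_inv_cancel₀ hζpne, one_smul]
        conv_lhs => rw [hζpu]
        rw [real_inner_smul_right, mul_pow]
      simp_rw [hrw]
      rw [integral_const_mul, momC u hun hug, hζpn]
  -- final computation
  have hae : (fun ω => ⟪α • g + w ω, ζ⟫ ^ 2)
      =ᵐ[volume] fun ω => α^2*x^2 + (2*α*x) * ⟪w ω, ζp⟫ + ⟪w ω, ζp⟫^2 := by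
    filter_upwards [hval] with ω hω
    have h1 : ⟪α • g + w ω, ζ⟫ = α * x + ⟪w ω, ζp⟫ := by
      rw [inner_add_left, real_inner_smul_left, ← hx]
      have hwz : ⟪w ω, ζp⟫ = ⟪w ω, ζ⟫ := by
        rw [hζp, inner_sub_right, real_inner_smul_right, hω.2, mul_zero, sub_zero]
      rw [hwz]
    rw [h1]; ring
  have hIadd : ∫ ω, (α^2*x^2 + (2*α*x) * ⟪w ω, ζp⟫ + ⟪w ω, ζp⟫^2)
      = (∫ ω, (α^2*x^2 + (2*α*x) * ⟪w ω, ζp⟫)) + ∫ ω, ⟪w ω, ζp⟫^2 :=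
    integral_add ((integrable_const _).add ((hint1 ζp).const_mul _)) (hint2 ζp)
  have hIadd2 : ∫ ω, (α^2*x^2 + (2*α*x) * ⟪w ω, ζp⟫)
      = (∫ ω, (α^2*x^2 : ℝ)) + ∫ ω, (2*α*x) * ⟪w ω, ζp⟫ :=
    integral_add (integrable_const _) ((hint1 ζp).const_mul _)
  rw [integral_congr_ae hae, hIadd, hIadd2, integral_const, integral_const_mul, I1, I2]
  simp only [measure_univ, probReal_univ, ENNReal.toReal_one, smul_eq_mul, one_mul, mul_zero, add_zero]
  ring
end

section
/- Let N ≥ 2 and 1 ≤ P ≤ N−1. Let g and ζ be unit vectors in ℝᴺ with x = ⟨g, ζ⟩, and let α ∈ [0, 1]. Let w be a random vector distributed according to the uniform probability measure on the sphere of radius √(1−α²) in the orthogonal complement of g, and set g' = α·g + w. Let ε¹, …, εᴾ be random unit vectors taking values in the orthogonal complement of ζ, independent of w, such that almost surely they are pairwise orthogonal and each εⁱ is marginally distributed according to the uniform probability measure on the unit sphere of the orthogonal complement of ζ. Define ζ' = ⟨g', ζ⟩ζ + Σᵢ ⟨g', εⁱ⟩εⁱ and assume ζ' ≠ 0 almost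 surely. Then E[⟨g', ζ'/‖ζ'‖⟩²] = (α²x² + (1 − α²)(1 − x²)/(N − 1))·(1 − P/(N − 1)) + P/(N − 1). -/
open scoped RealInnerProductSpace
open MeasureTheory ProbabilityTheory

section Helpers

set_option linter.unusedSectionVars false

variable {E : Type*} [NormedAddCommGroup E] [InnerProductSpace ℝ E] [FiniteDimensional ℝ E]
  [MeasurableSpace E] [BorelSpace E]

lemma my_integral_comp (μ : Measure E) (R : E ≃ₗᵢ[ℝ] E)
    (hmap : μ.map (fun y => R y) = μ) (f : E → ℝ) (hf : Continuous f) :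
    ∫ y, f (R y) ∂μ = ∫ y, f y ∂μ := by
  conv_rhs => rw [← hmap]
  rw [integral_map R.continuous.measurable.aemeasurable hf.aestronglyMeasurable]

lemma my_inner_integrable (μ : Measure E) [IsProbabilityMeasure μ] (r : ℝ)
    (hval : ∀ᵐ y ∂μ, ‖y‖ = r) (v : E) :
    Integrable (fun y => ⟪y, v⟫) μ := by
  refine Integrable.mono' (integrable_const (|r| * ‖v‖)) ?_ ?_
  · exact (continuous_id.inner continuous_const).aestronglyMeasurable
  · filter_upwards [hval] with y hy
    calc ‖⟪y, v⟫‖ = |⟪y, v⟫| := rfl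
      _ ≤ ‖y‖ * ‖v‖ := abs_real_inner_le_norm y v
      _ = |r| * ‖v‖ := by
            have h0 : 0 ≤ r := hy ▸ norm_nonneg y
            rw [hy, abs_of_nonneg h0]

lemma my_sq_integrable (μ : Measure E) [IsProbabilityMeasure μ] (r : ℝ)
    (hval : ∀ᵐ y ∂μ, ‖y‖ = r) (v : E) :
    Integrable (fun y => ⟪y, v⟫ ^ 2) μ := by
  refine Integrable.mono' (integrable_const (r ^ 2 * ‖v‖ ^ 2)) ?_ ?_
  · exact ((continuous_id.inner continuous_const).pow 2).aestronglyMeasurable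
  · filter_upwards [hval] with y hy
    have h1 : |⟪y, v⟫| ≤ ‖y‖ * ‖v‖ := abs_real_inner_le_norm y v
    have h2 : ‖⟪y, v⟫ ^ 2‖ = |⟪y, v⟫| ^ 2 := by
      rw [Real.norm_eq_abs, abs_pow]
    rw [h2, ← hy]
    calc |⟪y, v⟫| ^ 2 ≤ (‖y‖ * ‖v‖) ^ 2 := by
            exact pow_le_pow_left₀ (abs_nonneg _) h1 2
      _ = ‖y‖ ^ 2 * ‖v‖ ^ 2 := by ring

lemma my_mean_zero (g : E) (hg : ‖g‖ = 1) (μ : Measure E)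
    (hval : ∀ᵐ y ∂μ, ⟪y, g⟫ = 0)
    (hinv : ∀ R : E ≃ₗᵢ[ℝ] E, R g = g → μ.map (fun y => R y) = μ)
    (v : E) : ∫ y, ⟪y, v⟫ ∂μ = 0 := by
  set c := ⟪v, g⟫ with hc
  set v' := v - c • g with hv'
  have hgv' : ⟪v', g⟫ = 0 := by
    simp [hv', inner_sub_left, real_inner_smul_left, real_inner_self_eq_norm_sq, hg, hc,
      real_inner_comm v g]
  have key : ∫ y, ⟪y, v'⟫ ∂μ = 0 := by
    set R := Submodule.reflection (ℝ ∙ v')ᗮ with hR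
    have hRg : R g = g := Submodule.reflection_mem_subspace_eq_self
      (Submodule.mem_orthogonal_singleton_iff_inner_right.mpr hgv')
    have hRv : R v' = -v' :=
      Submodule.reflection_orthogonalComplement_singleton_eq_neg v'
    have h1 : ∫ y, ⟪R y, v'⟫ ∂μ = ∫ y, ⟪y, v'⟫ ∂μ :=
      my_integral_comp μ R (hinv R hRg) _ (continuous_id.inner continuous_const)
    have h2 : ∀ y, ⟪R y, v'⟫ = -⟪y, v'⟫ := by
      intro y
      have : ⟪R y, R v'⟫ = ⟪y, v'⟫ := R.inner_map_map y v'
      rw [hRv, inner_neg_right] at this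
      linarith
    simp_rw [h2] at h1
    rw [integral_neg] at h1
    linarith
  have : ∀ᵐ y ∂μ, ⟪y, v⟫ = ⟪y, v'⟫ := by
    filter_upwards [hval] with y hy
    simp [hv', inner_sub_right, real_inner_smul_right, hy]
  rw [integral_congr_ae this, key]

lemma my_second_moment (g : E) (hg : ‖g‖ = 1) (hdim : 2 ≤ Module.finrank ℝ E)
    (μ : Measure E) [IsProbabilityMeasure μ] (r : ℝ)
    (hval : ∀ᵐ y ∂μ, ‖y‖ = r ∧ ⟪y, g⟫ = 0)
    (hinv : ∀ R : E ≃ₗᵢ[ℝ] E, R g = g → μ.map (fun y => R y) = μ)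
    (v : E) :
    ∫ y, ⟪y, v⟫ ^ 2 ∂μ
      = r ^ 2 * (‖v‖ ^ 2 - ⟪v, g⟫ ^ 2) / ((Module.finrank ℝ E : ℝ) - 1) := by
  have hnorm : ∀ᵐ y ∂μ, ‖y‖ = r := hval.mono fun y hy => hy.1
  have hint : ∀ v : E, Integrable (fun y => ⟪y, v⟫ ^ 2) μ := my_sq_integrable μ r hnorm
  have hd1 : (1 : ℝ) ≤ (Module.finrank ℝ E : ℝ) - 1 := by
    have : (2 : ℝ) ≤ (Module.finrank ℝ E : ℝ) := by exact_mod_cast hdim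
    linarith
  have hdne : (Module.finrank ℝ E : ℝ) - 1 ≠ 0 := by linarith
  have S1 : ∀ u v : E, ‖u‖ = 1 → ‖v‖ = 1 → ⟪u, g⟫ = 0 → ⟪v, g⟫ = 0 →
      ∫ y, ⟪y, u⟫ ^ 2 ∂μ = ∫ y, ⟪y, v⟫ ^ 2 ∂μ := by
    intro u v hu hv hug hvg
    set R := Submodule.reflection (ℝ ∙ (u - v))ᗮ with hR
    have hRg : R g = g := Submodule.reflection_mem_subspace_eq_self
      (Submodule.mem_orthogonal_singleton_iff_inner_right.mpr
        (by rw [inner_sub_left, hug, hvg, sub_zero]))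
    have hRu : R u = v := Submodule.reflection_sub (hu.trans hv.symm)
    have key : ∀ y, ⟪R y, v⟫ ^ 2 = ⟪y, u⟫ ^ 2 := by
      intro y
      rw [← hRu, R.inner_map_map]
    have := my_integral_comp μ R (hinv R hRg) (fun y => ⟪y, v⟫ ^ 2)
      ((continuous_id.inner continuous_const).pow 2)
    simp_rw [key] at this
    rw [← this]
  have horth : Orthonormal ℝ ((↑) : ({g} : Set E) → E) := by
    constructor
    · rintro ⟨y, hy⟩
      simp only [Set.mem_singleton_iff] at hy
      simpa [hy] using hg
    · rintro ⟨y, hy⟩ ⟨z, hz⟩ hne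
      simp only [Set.mem_singleton_iff] at hy hz
      exact absurd (Subtype.ext (hy.trans hz.symm)) hne
  obtain ⟨u, b, hgu, hbu⟩ := horth.exists_orthonormalBasis_extension
  have hgmem : g ∈ u := hgu rfl
  have hcard : Fintype.card ↥u = Module.finrank ℝ E := by
    rw [← Module.finrank_eq_card_basis b.toBasis]
  have parseval : ∀ y : E, ∑ i : ↥u, ⟪y, b i⟫ ^ 2 = ‖y‖ ^ 2 := by
    intro y
    have := b.sum_inner_mul_inner y y
    rw [real_inner_self_eq_norm_sq] at this
    rw [← this]
    congr 1
    ext i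
    rw [real_inner_comm (b i) y, sq]
  have hsum : ∑ i : ↥u, ∫ y, ⟪y, (b i : E)⟫ ^ 2 ∂μ = r ^ 2 := by
    rw [← integral_finset_sum _ fun i _ => hint _]
    have : ∀ᵐ y ∂μ, ∑ i : ↥u, ⟪y, b i⟫ ^ 2 = r ^ 2 := by
      filter_upwards [hnorm] with y hy
      rw [parseval y, hy]
    rw [integral_congr_ae this, integral_const]
    simp
  have main_unit : ∀ v : E, ‖v‖ = 1 → ⟪v, g⟫ = 0 →
      ∫ y, ⟪y, v⟫ ^ 2 ∂μ = r ^ 2 / ((Module.finrank ℝ E : ℝ) - 1) := by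
    intro v hv hvg
    classical
    set g₀ : ↥u := ⟨g, hgmem⟩ with hg₀
    have hbg₀ : (b g₀ : E) = g := by rw [hbu]
    have hg0 : ∫ y, ⟪y, (b g₀ : E)⟫ ^ 2 ∂μ = 0 := by
      have : ∀ᵐ y ∂μ, ⟪y, (b g₀ : E)⟫ ^ 2 = 0 := by
        filter_upwards [hval] with y hy
        rw [hbg₀, hy.2]; ring
      rw [integral_congr_ae this, integral_zero]
    have hterm : ∀ i : ↥u, i ≠ g₀ → ∫ y, ⟪y, (b i : E)⟫ ^ 2 ∂μ = ∫ y, ⟪y, v⟫ ^ 2 ∂μ := by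
      intro i hi
      refine S1 _ _ (b.orthonormal.1 i) hv ?_ hvg
      simpa [hbg₀] using b.orthonormal.2 hi
    have hsplit := hsum
    rw [← Finset.add_sum_erase _ _ (Finset.mem_univ g₀), hg0, zero_add,
      Finset.sum_congr rfl (fun i hi => hterm i (Finset.ne_of_mem_erase hi)),
      Finset.sum_const, Finset.card_erase_of_mem (Finset.mem_univ _), Finset.card_univ,
      hcard] at hsplit
    have hcast : ((Module.finrank ℝ E - 1 : ℕ) : ℝ) = (Module.finrank ℝ E : ℝ) - 1 := by
      have : 1 ≤ Module.finrank ℝ E := le_trans (by norm_num) hdim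
      push_cast [Nat.cast_sub this]
      ring
    rw [nsmul_eq_mul, hcast] at hsplit
    field_simp
    linarith
  set c := ⟪v, g⟫ with hc
  set v' := v - c • g with hv'
  have hv'g : ⟪v', g⟫ = 0 := by
    simp [hv', inner_sub_left, real_inner_smul_left, real_inner_self_eq_norm_sq, hg, hc]
  have hae : ∀ᵐ y ∂μ, ⟪y, v⟫ ^ 2 = ⟪y, v'⟫ ^ 2 := by
    filter_upwards [hval] with y hy
    have : ⟪y, v⟫ = ⟪y, v'⟫ := by
      simp [hv', inner_sub_right, real_inner_smul_right, hy.2]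
    rw [this]
  have hnv' : ‖v'‖ ^ 2 = ‖v‖ ^ 2 - c ^ 2 := by
    rw [hv', @norm_sub_sq_real]
    have h1 : ⟪v, c • g⟫ = c * c := by
      rw [real_inner_smul_right, ← hc]
    have h2 : ‖c • g‖ ^ 2 = c ^ 2 := by
      rw [norm_smul, mul_pow, hg]; simp [sq_abs]
    rw [h1, h2]; ring
  rw [integral_congr_ae hae]
  by_cases h0 : v' = 0
  · have : ‖v‖ ^ 2 - c ^ 2 = 0 := by rw [← hnv', h0]; simp
    rw [this]
    simp only [h0, inner_zero_right]
    simp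
  · have hnv'0 : ‖v'‖ ≠ 0 := norm_ne_zero_iff.mpr h0
    set e := ‖v'‖⁻¹ • v' with he
    have hee : ‖e‖ = 1 := by
      rw [he, norm_smul, norm_inv, norm_norm, inv_mul_cancel₀ hnv'0]
    have heg : ⟪e, g⟫ = 0 := by rw [he, real_inner_smul_left, hv'g, mul_zero]
    have hrepr : ∀ y, ⟪y, v'⟫ ^ 2 = ‖v'‖ ^ 2 * ⟪y, e⟫ ^ 2 := by
      intro y
      rw [he, real_inner_smul_right, mul_pow, ← mul_assoc, inv_pow,
        mul_inv_cancel₀ (by positivity : ‖v'‖ ^ 2 ≠ 0), one_mul]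
    simp_rw [hrepr]
    rw [integral_const_mul, main_unit e hee heg, hnv']
    ring

end Helpers

set_option maxHeartbeats 2000000 in
/-- One step of the iterative estimator for a perturbed gradient: for unit vectors `g, ζ`
with `x = ⟨g, ζ⟩`, `α ∈ [0,1]`, a random vector `w` uniform on the sphere of radius
`√(1-α²)` in the orthogonal complement of `g`, `g' = α g + w`, and random unit vectors
`ε¹, …, εᴾ` in the orthogonal complement of `ζ` (independent of `w`, almost surely pairwise
orthogonal, each marginally uniform on the unit sphere of that complement), the update
`ζ' = ⟨g', ζ⟩ ζ + ∑ i ⟨g', εⁱ⟩ εⁱ` satisfies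
`E[⟨g', ζ̂'⟩²] = (α² x² + (1-α²)(1-x²)/(N-1)) (1 - P/(N-1)) + P/(N-1)`. -/
theorem expected_cosine_sq_one_step_nonlinear
    (N P : ℕ) (hN : 2 ≤ N) (hP : 1 ≤ P) (hPN : P ≤ N - 1)
    {Ω : Type*} [MeasureSpace Ω] [IsProbabilityMeasure (volume : Measure Ω)]
    (g ζ : EuclideanSpace ℝ (Fin N)) (hg : ‖g‖ = 1) (hζ : ‖ζ‖ = 1)
    (x : ℝ) (hx : x = ⟪g, ζ⟫)
    (α : ℝ) (hα : α ∈ Set.Icc (0 : ℝ) 1)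
    (w : Ω → EuclideanSpace ℝ (Fin N)) (hwmeas : Measurable w)
    (hwval : ∀ᵐ ω, ‖w ω‖ = Real.sqrt (1 - α ^ 2) ∧ ⟪w ω, g⟫ = 0)
    (hwinv : ∀ R : EuclideanSpace ℝ (Fin N) ≃ₗᵢ[ℝ] EuclideanSpace ℝ (Fin N), R g = g →
      Measure.map (fun y => R y) (Measure.map w volume) = Measure.map w volume)
    (g' : Ω → EuclideanSpace ℝ (Fin N)) (hg' : ∀ ω, g' ω = α • g + w ω)
    (ε : Fin P → Ω → EuclideanSpace ℝ (Fin N)) (hεmeas : ∀ i, Measurable (ε i))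
    (hεval : ∀ᵐ ω, ∀ i, ‖ε i ω‖ = 1 ∧ ⟪ε i ω, ζ⟫ = 0)
    (hεorth : ∀ᵐ ω, ∀ i j, i ≠ j → ⟪ε i ω, ε j ω⟫ = 0)
    (hεinv : ∀ i, ∀ R : EuclideanSpace ℝ (Fin N) ≃ₗᵢ[ℝ] EuclideanSpace ℝ (Fin N), R ζ = ζ →
      Measure.map (fun y => R y) (Measure.map (ε i) volume) = Measure.map (ε i) volume)
    (hindep : IndepFun w (fun ω => fun i => ε i ω) volume)
    (ζ' : Ω → EuclideanSpace ℝ (Fin N))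
    (hζ' : ∀ ω, ζ' ω = ⟪g' ω, ζ⟫ • ζ + ∑ i, ⟪g' ω, ε i ω⟫ • ε i ω)
    (hζ'0 : ∀ᵐ ω, ζ' ω ≠ 0) :
    ∫ ω, ⟪g' ω, ‖ζ' ω‖⁻¹ • ζ' ω⟫ ^ 2
      = (α ^ 2 * x ^ 2 + (1 - α ^ 2) * (1 - x ^ 2) / ((N : ℝ) - 1))
          * (1 - (P : ℝ) / ((N : ℝ) - 1)) + (P : ℝ) / ((N : ℝ) - 1) := by
  classical
  obtain ⟨hα0, hα1⟩ := hα
  have hr2 : Real.sqrt (1 - α ^ 2) ^ 2 = 1 - α ^ 2 := Real.sq_sqrt (by nlinarith)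
  set r := Real.sqrt (1 - α ^ 2) with hrdef
  have hrnn : 0 ≤ r := Real.sqrt_nonneg _
  have hdim : Module.finrank ℝ (EuclideanSpace ℝ (Fin N)) = N := finrank_euclideanSpace_fin
  have hdim2 : 2 ≤ Module.finrank ℝ (EuclideanSpace ℝ (Fin N)) := by rw [hdim]; exact hN
  have hN2 : (2 : ℝ) ≤ (N : ℝ) := by exact_mod_cast hN
  have hNne : (N : ℝ) - 1 ≠ 0 := by linarith
  -- the law of w
  set μ := Measure.map w volume with hμ
  haveI : IsProbabilityMeasure μ := Measure.isProbabilityMeasure_map hwmeas.aemeasurable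
  have hsetw : MeasurableSet {y : EuclideanSpace ℝ (Fin N) | ‖y‖ = r ∧ ⟪y, g⟫ = 0} := by
    have : IsClosed {y : EuclideanSpace ℝ (Fin N) | ‖y‖ = r ∧ ⟪y, g⟫ = 0} :=
      (isClosed_eq continuous_norm continuous_const).inter
        (isClosed_eq (continuous_id.inner continuous_const) continuous_const)
    exact this.measurableSet
  have hμval : ∀ᵐ y ∂μ, ‖y‖ = r ∧ ⟪y, g⟫ = 0 := by
    rw [hμ, ae_map_iff hwmeas.aemeasurable hsetw]
    exact hwval
  have hμnorm : ∀ᵐ y ∂μ, ‖y‖ = r := hμval.mono fun y h => h.1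
  set C := α ^ 2 * x ^ 2 + (1 - α ^ 2) * (1 - x ^ 2) / ((N : ℝ) - 1) with hC
  have hgζ : ⟪ζ, g⟫ = x := by rw [real_inner_comm, ← hx]
  -- norm of α•g + y, μ-a.e.
  have hμnorm1 : ∀ᵐ y ∂μ, ‖α • g + y‖ ^ 2 = 1 := by
    filter_upwards [hμval] with y hy
    rw [@norm_add_sq_real, real_inner_smul_left, real_inner_comm y g, hy.2, norm_smul, hy.1,
      hg, Real.norm_eq_abs]
    rw [mul_pow, sq_abs]
    rw [hrdef, hr2]
    ring
  -- integrability of the squared inner with α•g + y over μ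
  have hμint1 : Integrable (fun y => ⟪α • g + y, ζ⟫ ^ 2) μ := by
    refine Integrable.mono' (integrable_const 1) ?_ ?_
    · exact (((continuous_const.add continuous_id).inner continuous_const).pow 2
        ).aestronglyMeasurable
    · filter_upwards [hμnorm1] with y hy
      have h1 : |⟪α • g + y, ζ⟫| ≤ ‖α • g + y‖ * ‖ζ‖ := abs_real_inner_le_norm _ _
      rw [Real.norm_eq_abs, abs_pow]
      calc |⟪α • g + y, ζ⟫| ^ 2 ≤ (‖α • g + y‖ * ‖ζ‖) ^ 2 :=
            pow_le_pow_left₀ (abs_nonneg _) h1 2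
        _ = 1 := by rw [mul_pow, hy, hζ]; norm_num
  -- Step C : second moment in the ζ direction
  have stepC : ∫ y, ⟪α • g + y, ζ⟫ ^ 2 ∂μ = C := by
    have hexp : ∀ y : EuclideanSpace ℝ (Fin N),
        ⟪α • g + y, ζ⟫ ^ 2 = α ^ 2 * x ^ 2 + (2 * α * x) * ⟪y, ζ⟫ + ⟪y, ζ⟫ ^ 2 := by
      intro y
      rw [inner_add_left, real_inner_smul_left, ← hx]
      ring
    simp_rw [hexp]
    have i1 : Integrable (fun _ : EuclideanSpace ℝ (Fin N) => α ^ 2 * x ^ 2) μ :=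
      integrable_const _
    have i2 : Integrable (fun y => (2 * α * x) * ⟪y, ζ⟫) μ :=
      (my_inner_integrable μ r hμnorm ζ).const_mul _
    have i3 : Integrable (fun y => ⟪y, ζ⟫ ^ 2) μ := my_sq_integrable μ r hμnorm ζ
    have i12 : Integrable (fun y => α ^ 2 * x ^ 2 + (2 * α * x) * ⟪y, ζ⟫) μ := i1.add i2
    rw [integral_add i12 i3, integral_add i1 i2, integral_const, integral_const_mul,
      my_mean_zero g hg μ (hμval.mono fun y h => h.2) hwinv ζ,
      my_second_moment g hg hdim2 μ r hμval hwinv ζ, hζ, hgζ, hdim, hr2]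
    simp [hC]
  -- pointwise reduction of the integrand
  have pointwise : ∀ᵐ ω, ⟪g' ω, ‖ζ' ω‖⁻¹ • ζ' ω⟫ ^ 2
      = ⟪g' ω, ζ⟫ ^ 2 + ∑ i, ⟪g' ω, ε i ω⟫ ^ 2 := by
    filter_upwards [hεval, hεorth, hζ'0] with ω hval horth hne
    set a := ⟪g' ω, ζ⟫ with ha
    set S := a ^ 2 + ∑ i, ⟪g' ω, ε i ω⟫ ^ 2 with hS
    have expand1 : ⟪g' ω, ζ' ω⟫ = S := by
      rw [hζ' ω, inner_add_right, real_inner_smul_right, inner_sum]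
      simp_rw [real_inner_smul_right]
      rw [hS, ← ha]
      simp [pow_two]
    have expand2 : ⟪ζ' ω, ζ' ω⟫ = S := by
      rw [hζ' ω, real_inner_add_add_self]
      have h1 : ⟪a • ζ, a • ζ⟫ = a ^ 2 := by
        rw [real_inner_smul_left, real_inner_smul_right, real_inner_self_eq_norm_sq, hζ]
        ring
      have h2 : ⟪a • ζ, ∑ i, ⟪g' ω, ε i ω⟫ • ε i ω⟫ = 0 := by
        rw [inner_sum]
        refine Finset.sum_eq_zero fun i _ => ?_
        rw [real_inner_smul_left, real_inner_smul_right, real_inner_comm (ε i ω) ζ,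
          (hval i).2, mul_zero, mul_zero]
      have h3 : ⟪∑ i, ⟪g' ω, ε i ω⟫ • ε i ω, ∑ j, ⟪g' ω, ε j ω⟫ • ε j ω⟫
          = ∑ i, ⟪g' ω, ε i ω⟫ ^ 2 := by
        rw [sum_inner]
        refine Finset.sum_congr rfl fun i _ => ?_
        rw [real_inner_smul_left, inner_sum, Finset.sum_eq_single i]
        · rw [real_inner_smul_right, real_inner_self_eq_norm_sq, (hval i).1]
          ring
        · intro j _ hj
          rw [real_inner_smul_right, horth i j (Ne.symm hj), mul_zero]
        · intro h
          exact absurd (Finset.mem_univ i) h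
      rw [h1, h2, h3, hS]
      ring
    have hnormsq : ‖ζ' ω‖ ^ 2 = S := by rw [← real_inner_self_eq_norm_sq, expand2]
    have hpos : (0 : ℝ) < ‖ζ' ω‖ := norm_pos_iff.mpr hne
    rw [real_inner_smul_right, expand1, ← hnormsq]
    field_simp
  -- integrability on Ω
  have hg'meas : Measurable g' := by
    have : g' = fun ω => α • g + w ω := funext hg'
    rw [this]
    exact measurable_const.add hwmeas
  have hg'norm : ∀ᵐ ω, ‖g' ω‖ = 1 := by
    filter_upwards [hwval] with ω h
    have h2 : ‖g' ω‖ ^ 2 = 1 := by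
      rw [hg' ω, @norm_add_sq_real, real_inner_smul_left, real_inner_comm (w ω) g, h.2,
        norm_smul, h.1, hg, Real.norm_eq_abs, mul_pow, sq_abs, hr2]
      ring
    nlinarith [norm_nonneg (g' ω)]
  have hA_int : Integrable (fun ω => ⟪g' ω, ζ⟫ ^ 2) volume := by
    refine Integrable.mono' (integrable_const 1) ?_ ?_
    · exact ((hg'meas.inner measurable_const).pow_const 2).aestronglyMeasurable
    · filter_upwards [hg'norm] with ω h
      have h1 : |⟪g' ω, ζ⟫| ≤ ‖g' ω‖ * ‖ζ‖ := abs_real_inner_le_norm _ _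
      rw [Real.norm_eq_abs, abs_pow]
      calc |⟪g' ω, ζ⟫| ^ 2 ≤ (‖g' ω‖ * ‖ζ‖) ^ 2 := pow_le_pow_left₀ (abs_nonneg _) h1 2
        _ = 1 := by rw [h, hζ]; norm_num
  have hB_int : ∀ i, Integrable (fun ω => ⟪g' ω, ε i ω⟫ ^ 2) volume := by
    intro i
    refine Integrable.mono' (integrable_const 1) ?_ ?_
    · exact ((hg'meas.inner (hεmeas i)).pow_const 2).aestronglyMeasurable
    · filter_upwards [hg'norm, hεval] with ω h hε
      have h1 : |⟪g' ω, ε i ω⟫| ≤ ‖g' ω‖ * ‖ε i ω‖ := abs_real_inner_le_norm _ _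
      rw [Real.norm_eq_abs, abs_pow]
      calc |⟪g' ω, ε i ω⟫| ^ 2 ≤ (‖g' ω‖ * ‖ε i ω‖) ^ 2 :=
            pow_le_pow_left₀ (abs_nonneg _) h1 2
        _ = 1 := by rw [h, (hε i).1]; norm_num
  -- the first term
  have hAeq : ∫ ω, ⟪g' ω, ζ⟫ ^ 2 = C := by
    have h1 : (∫ ω, ⟪g' ω, ζ⟫ ^ 2) = ∫ ω, ⟪α • g + w ω, ζ⟫ ^ 2 := by
      congr 1
      funext ω
      rw [hg' ω]
    rw [h1, ← stepC, hμ]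
    rw [integral_map hwmeas.aemeasurable
      ((((continuous_const.add continuous_id).inner continuous_const).pow 2
        ).aestronglyMeasurable)]
  -- the ε terms
  have hBeq : ∀ i, ∫ ω, ⟪g' ω, ε i ω⟫ ^ 2 = (1 - C) / ((N : ℝ) - 1) := by
    intro i
    set ν := Measure.map (ε i) volume with hν
    haveI : IsProbabilityMeasure ν := Measure.isProbabilityMeasure_map (hεmeas i).aemeasurable
    have hsetε : MeasurableSet {y : EuclideanSpace ℝ (Fin N) | ‖y‖ = 1 ∧ ⟪y, ζ⟫ = 0} := by
      have : IsClosed {y : EuclideanSpace ℝ (Fin N) | ‖y‖ = 1 ∧ ⟪y, ζ⟫ = 0} :=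
        (isClosed_eq continuous_norm continuous_const).inter
          (isClosed_eq (continuous_id.inner continuous_const) continuous_const)
      exact this.measurableSet
    have hνval : ∀ᵐ y ∂ν, ‖y‖ = 1 ∧ ⟪y, ζ⟫ = 0 := by
      rw [hν, ae_map_iff (hεmeas i).aemeasurable hsetε]
      filter_upwards [hεval] with ω h using h i
    have hiind : IndepFun w (ε i) volume :=
      hindep.comp measurable_id (measurable_pi_apply i)
    have hpair : volume.map (fun ω => (w ω, ε i ω)) = μ.prod ν :=
      (indepFun_iff_map_prod_eq_prod_map_map hwmeas.aemeasurable
        (hεmeas i).aemeasurable).mp hiind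
    set F : EuclideanSpace ℝ (Fin N) × EuclideanSpace ℝ (Fin N) → ℝ :=
      fun p => ⟪p.2, α • g + p.1⟫ ^ 2 with hF
    have hFcont : Continuous F :=
      (continuous_snd.inner (continuous_const.add continuous_fst)).pow 2
    -- a.e. bound on the product measure
    have hfull : ∀ᵐ p ∂(μ.prod ν), ‖p.1‖ = r ∧ ‖p.2‖ = 1 := by
      have hsA : MeasurableSet {y : EuclideanSpace ℝ (Fin N) | ‖y‖ = r} :=
        (isClosed_eq continuous_norm continuous_const).measurableSet
      have hsB : MeasurableSet {y : EuclideanSpace ℝ (Fin N) | ‖y‖ = 1} :=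
        (isClosed_eq continuous_norm continuous_const).measurableSet
      have hμA : μ {y | ‖y‖ = r} = 1 := by
        rw [← mem_ae_iff_prob_eq_one hsA]
        exact hμnorm
      have hνB : ν {y | ‖y‖ = 1} = 1 := by
        rw [← mem_ae_iff_prob_eq_one hsB]
        exact hνval.mono fun y h => h.1
      have hmem : ({y : EuclideanSpace ℝ (Fin N) | ‖y‖ = r} ×ˢ
          {y : EuclideanSpace ℝ (Fin N) | ‖y‖ = 1}) ∈ ae (μ.prod ν) := by
        rw [mem_ae_iff_prob_eq_one (hsA.prod hsB), Measure.prod_prod, hμA, hνB, one_mul]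
      filter_upwards [hmem] with p hp
      exact ⟨hp.1, hp.2⟩
    have hFint : Integrable F (μ.prod ν) := by
      refine Integrable.mono' (integrable_const ((|α| + r) ^ 2)) hFcont.aestronglyMeasurable ?_
      filter_upwards [hfull] with p hp
      have hb : |⟪p.2, α • g + p.1⟫| ≤ ‖p.2‖ * ‖α • g + p.1‖ := abs_real_inner_le_norm _ _
      have hn : ‖p.2‖ * ‖α • g + p.1‖ ≤ |α| + r := by
        rw [hp.2, one_mul]
        calc ‖α • g + p.1‖ ≤ ‖α • g‖ + ‖p.1‖ := norm_add_le _ _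
          _ = |α| + r := by rw [norm_smul, hg, Real.norm_eq_abs, mul_one, hp.1]
      have habs : (0:ℝ) ≤ |α| + r := by positivity
      rw [hF, Real.norm_eq_abs, abs_pow]
      exact pow_le_pow_left₀ (abs_nonneg _) (hb.trans hn) 2
    have hinner : ∀ a : EuclideanSpace ℝ (Fin N),
        ∫ b, F (a, b) ∂ν = (‖α • g + a‖ ^ 2 - ⟪α • g + a, ζ⟫ ^ 2) / ((N : ℝ) - 1) := by
      intro a
      have := my_second_moment ζ hζ hdim2 ν 1 hνval (hεinv i) (α • g + a)
      rw [one_pow, one_mul, hdim] at this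
      exact this
    calc ∫ ω, ⟪g' ω, ε i ω⟫ ^ 2
        = ∫ ω, F (w ω, ε i ω) ∂volume := by
          congr 1
          funext ω
          rw [hF, hg' ω, real_inner_comm]
      _ = ∫ p, F p ∂(volume.map (fun ω => (w ω, ε i ω))) :=
          (integral_map (hwmeas.prodMk (hεmeas i)).aemeasurable
            hFcont.aestronglyMeasurable).symm
      _ = ∫ p, F p ∂(μ.prod ν) := by rw [hpair]
      _ = ∫ a, ∫ b, F (a, b) ∂ν ∂μ := integral_prod F hFint
      _ = ∫ a, (‖α • g + a‖ ^ 2 - ⟪α • g + a, ζ⟫ ^ 2) / ((N : ℝ) - 1) ∂μ := by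
          simp_rw [hinner]
      _ = ∫ a, (1 - ⟪α • g + a, ζ⟫ ^ 2) / ((N : ℝ) - 1) ∂μ := by
          refine integral_congr_ae ?_
          filter_upwards [hμnorm1] with a ha
          rw [ha]
      _ = (1 - C) / ((N : ℝ) - 1) := by
          rw [integral_div, integral_sub (integrable_const 1) hμint1, integral_const,
            stepC]
          simp
  -- put everything together
  rw [integral_congr_ae pointwise,
    integral_add hA_int (integrable_finset_sum _ fun i _ => hB_int i),
    integral_finset_sum _ fun i _ => hB_int i, hAeq]
  simp_rw [hBeq]
  rw [Finset.sum_const, Finset.card_univ, Fintype.card_fin, nsmul_eq_mul]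
  field_simp
  ring
end
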